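/- arXiv:1104.0293 — 3 statements merged into one kernel-verified Lean document; each statement's English description precedes it below -/
import Mathlib

section
/- Let H be a reduced, commutative, cancellative, atomic monoid. Then c_eq(H) ≤ sup{|y| : (x,y) ∈ A(∼_{H,eq}) and x, y are not ≈_eq-related}. -/
namespace CMR

variable {α : Type*} [CancelCommMonoid α]

/-- The factorization monoid `Z(H)`: the free abelian monoid over the set of atoms of `H`,
modeled as multisets of atoms. -/
abbrev Fac (α : Type*) [CancelCommMonoid α] : Type _ := Multiset {u : α // Irreducible u}

/-- The factorization homomorphism `π : Z(H) → H`. -/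
def piF (z : Fac α) : α := (z.map Subtype.val).prod

/-- `Z a`: the set of factorizations of `a`. -/
def Z (a : α) : Set (Fac α) := {z | piF z = a}

/-- `L a`: the set of lengths of `a`. -/
def L (a : α) : Set ℕ := {n | ∃ z ∈ Z a, Multiset.card z = n}

/-- `Zk a k`: the factorizations of `a` of length `k`. -/
def Zk (a : α) (k : ℕ) : Set (Fac α) := {z ∈ Z a | Multiset.card z = k}

/-- `ZM a M`: the factorizations of `a` whose length lies in `M`. -/
def ZM (a : α) (M : Set ℕ) : Set (Fac α) := {z ∈ Z a | Multiset.card z ∈ M}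

/-- The distance between two factorizations:
`d(z,z') = max (|z / gcd(z,z')|, |z' / gcd(z,z')|)`. -/
noncomputable def d (z z' : Fac α) : ℕ :=
  letI := Classical.decEq {u : α // Irreducible u}
  max (Multiset.card (z - z')) (Multiset.card (z' - z))

/-- The distance between two sets of factorizations, the minimum of pairwise
distances (with the convention `sInf ∅ = 0`). -/
noncomputable def dS (X Y : Set (Fac α)) : ℕ :=
  sInf {n : ℕ | ∃ x ∈ X, ∃ y ∈ Y, d x y = n}

/-- `k` and `l` are adjacent lengths of `a` (with `k < l`):
`L(a) ∩ [k, l] = {k, l}`. -/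
def Adjacent (a : α) (k l : ℕ) : Prop :=
  k ∈ L a ∧ l ∈ L a ∧ k < l ∧ ∀ m ∈ L a, k ≤ m → m ≤ l → m = k ∨ m = l

/-- A chain of factorizations of `a` from `z` to `z'` whose consecutive members
satisfy the step predicate `P`. -/
def Chain (a : α) (P : Fac α → Fac α → Prop) (z z' : Fac α) : Prop :=
  ∃ (n : ℕ) (c : Fin (n + 1) → Fac α),
    c 0 = z ∧ c (Fin.last n) = z' ∧ (∀ i, c i ∈ Z a) ∧
    ∀ i : Fin n, P (c i.castSucc) (c i.succ)

/-- The catenary degree of an element: the smallest `N ∈ ℕ∞` such that any two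
factorizations of `a` are connected by an `N`-chain. -/
noncomputable def cat (a : α) : ℕ∞ :=
  sInf {N : ℕ∞ | ∀ z ∈ Z a, ∀ z' ∈ Z a,
    Chain a (fun x y => (d x y : ℕ∞) ≤ N) z z'}

/-- The equal catenary degree of an element: the smallest `N ∈ ℕ∞` such that any two
factorizations of `a` of the same length are connected by an equal-length `N`-chain. -/
noncomputable def ceq (a : α) : ℕ∞ :=
  sInf {N : ℕ∞ | ∀ z ∈ Z a, ∀ z' ∈ Z a, Multiset.card z = Multiset.card z' →
    Chain a (fun x y => (d x y : ℕ∞) ≤ N ∧ Multiset.card x = Multiset.card y) z z'}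

/-- The monotone catenary degree of an element: the smallest `N ∈ ℕ∞` such that any two
factorizations of `a` (ordered by length) are connected by a monotone `N`-chain. -/
noncomputable def cmon (a : α) : ℕ∞ :=
  sInf {N : ℕ∞ | ∀ z ∈ Z a, ∀ z' ∈ Z a, Multiset.card z ≤ Multiset.card z' →
    Chain a (fun x y => (d x y : ℕ∞) ≤ N ∧ Multiset.card x ≤ Multiset.card y) z z'}

/-- The adjacent catenary degree of an element:
`c_adj(a) = sup{d(Z_k(a), Z_l(a)) : k, l ∈ L(a) adjacent}`. -/
noncomputable def cadj (a : α) : ℕ∞ :=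
  sSup {r : ℕ∞ | ∃ k l : ℕ, Adjacent a k l ∧ r = (dS (Zk a k) (Zk a l) : ℕ∞)}

noncomputable def catH (α : Type*) [CancelCommMonoid α] : ℕ∞ := ⨆ a : α, cat a
noncomputable def ceqH (α : Type*) [CancelCommMonoid α] : ℕ∞ := ⨆ a : α, ceq a
noncomputable def cmonH (α : Type*) [CancelCommMonoid α] : ℕ∞ := ⨆ a : α, cmon a
noncomputable def cadjH (α : Type*) [CancelCommMonoid α] : ℕ∞ := ⨆ a : α, cadj a

/-- `gcd(x, y) ≠ 1`: the two factorizations share an atom. -/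
def RStep (x y : Fac α) : Prop := ∃ u, u ∈ x ∧ u ∈ y

/-- `z ≈ z'`: there is an `R`-chain concatenating `z` and `z'` in `Z a`. -/
def RRel (a : α) (z z' : Fac α) : Prop := Chain a RStep z z'

/-- `z ≈_eq z'`: there is an equal-length `R`-chain concatenating `z` and `z'` in `Z a`. -/
def RRelEq (a : α) (z z' : Fac α) : Prop :=
  Chain a (fun x y => RStep x y ∧ Multiset.card x = Multiset.card y) z z'

/-- There is a monotone `R`-chain from `z` to `z'` in `Z a`. -/
def MonRChain (a : α) (z z' : Fac α) : Prop :=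
  Chain a (fun x y => RStep x y ∧ Multiset.card x ≤ Multiset.card y) z z'

/-- `μ(a)`: the supremum, over the `R`-classes `ρ` of `Z a`, of the minimal length of
an element of `ρ`. -/
noncomputable def mu (a : α) : ℕ∞ :=
  sSup {r : ℕ∞ | ∃ z ∈ Z a,
    r = ((sInf {n : ℕ | ∃ z', RRel a z z' ∧ Multiset.card z' = n} : ℕ) : ℕ∞)}

noncomputable def muH (α : Type*) [CancelCommMonoid α] : ℕ∞ := ⨆ a : α, mu a

/-- `μ_eq(a) = sup{k ∈ L(a) : Z_k(a) has more than one ≈_eq-class}`. -/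
noncomputable def mueq (a : α) : ℕ∞ :=
  sSup {r : ℕ∞ | ∃ k ∈ L a,
    (∃ z ∈ Zk a k, ∃ z' ∈ Zk a k, ¬ RRelEq a z z') ∧ r = (k : ℕ∞)}

noncomputable def mueqH (α : Type*) [CancelCommMonoid α] : ℕ∞ := ⨆ a : α, mueq a

/-- `μ_adj(a) = sup{k ∈ L(a) : d(Z_k(a), Z_l(a)) = k for the l ∈ L(a), l < k adjacent to k}`. -/
noncomputable def muadj (a : α) : ℕ∞ :=
  sSup {r : ℕ∞ | ∃ k ∈ L a,
    (∃ l : ℕ, Adjacent a l k ∧ dS (Zk a k) (Zk a l) = k) ∧ r = (k : ℕ∞)}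

noncomputable def muadjH (α : Type*) [CancelCommMonoid α] : ℕ∞ := ⨆ a : α, muadj a

/-- The monoid of relations of `H`, as a subset of `Z(H) × Z(H)`. -/
def relMon (α : Type*) [CancelCommMonoid α] : Set (Fac α × Fac α) :=
  {p | piF p.1 = piF p.2}

/-- The monoid of equal-length relations of `H`. -/
def relMonEq (α : Type*) [CancelCommMonoid α] : Set (Fac α × Fac α) :=
  {p | piF p.1 = piF p.2 ∧ Multiset.card p.1 = Multiset.card p.2}

/-- The monoid of monotone relations of `H`. -/
def relMonMon (α : Type*) [CancelCommMonoid α] : Set (Fac α × Fac α) :=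
  {p | piF p.1 = piF p.2 ∧ Multiset.card p.1 ≤ Multiset.card p.2}

/-- `p` is an atom (irreducible element) of the reduced submonoid `S` of `Z(H) × Z(H)`. -/
def IsAtomIn (S : Set (Fac α × Fac α)) (p : Fac α × Fac α) : Prop :=
  p ∈ S ∧ p ≠ 0 ∧ ∀ q ∈ S, ∀ r ∈ S, p = q + r → q = 0 ∨ r = 0

/-- `A_a(S) = A(S) ∩ (Z(a) × Z(a))`. -/
def AtomsAt (S : Set (Fac α × Fac α)) (a : α) : Set (Fac α × Fac α) :=
  {p | IsAtomIn S p ∧ p.1 ∈ Z a ∧ p.2 ∈ Z a}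

/-- The tame degree `t(a, x)`. -/
noncomputable def tdeg (a : α) (x : Fac α) : ℕ∞ :=
  sInf {N : ℕ∞ | ∀ z ∈ Z a, (∃ w ∈ Z a, x ≤ w) →
    ∃ z' ∈ Z a, x ≤ z' ∧ (d z z' : ℕ∞) ≤ N}

/-- The tame degree `t(H) = sup{t(a, u) : a ∈ H, u ∈ A(H)}`. -/
noncomputable def tH (α : Type*) [CancelCommMonoid α] : ℕ∞ :=
  ⨆ (a : α) (u : {u : α // Irreducible u}), tdeg a {u}

/-- The `m`-adjacent catenary degree of an element:
`c_{ad,m}(a) = sup{d(Z_k(a), Z_{[k-m,k)}(a)) : k ∈ L(a)}`. -/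
noncomputable def cadm (m : ℕ) (a : α) : ℕ∞ :=
  sSup {r : ℕ∞ | ∃ k ∈ L a, r = (dS (Zk a k) (ZM a (Set.Ico (k - m) k)) : ℕ∞)}

noncomputable def cadmH (α : Type*) [CancelCommMonoid α] (m : ℕ) : ℕ∞ := ⨆ a : α, cadm m a

/-- `μ_{ad,m}(a) = sup{k ∈ L(a) : d(Z_k(a), Z_{[k-m,k)}(a)) = k}`. -/
noncomputable def muadm (m : ℕ) (a : α) : ℕ∞ :=
  sSup {r : ℕ∞ | ∃ k ∈ L a, dS (Zk a k) (ZM a (Set.Ico (k - m) k)) = k ∧ r = (k : ℕ∞)}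

noncomputable def muadmH (α : Type*) [CancelCommMonoid α] (m : ℕ) : ℕ∞ := ⨆ a : α, muadm m a

/-- `H` is reduced: the only unit is `1`. -/
def Reduced (α : Type*) [CancelCommMonoid α] : Prop := ∀ a : α, IsUnit a → a = 1

/-- `H` is atomic: every element is a product of atoms. -/
def Atomic (α : Type*) [CancelCommMonoid α] : Prop := ∀ a : α, ∃ z : Fac α, piF z = a

/-- The ascending chain condition on principal ideals. -/
def ACCP (α : Type*) [CancelCommMonoid α] : Prop :=
  ∀ f : ℕ → α, (∀ n, f (n + 1) ∣ f n) → ∃ N, ∀ n, N ≤ n → f N ∣ f n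

section Aux

variable {α : Type*} [CancelCommMonoid α]

lemma mem_Z {a : α} {z : Fac α} : z ∈ Z a ↔ piF z = a := Iff.rfl

lemma piF_add (x y : Fac α) : piF (x + y) = piF x * piF y := by
  simp [piF]

lemma piF_cons (u : {u : α // Irreducible u}) (x : Fac α) :
    piF (u ::ₘ x) = u.val * piF x := by simp [piF]

lemma d_add_left (r x y : Fac α) : d (r + x) (r + y) = d x y := by
  simp only [d, add_tsub_add_eq_tsub_left]

lemma d_add_right (x y r : Fac α) : d (x + r) (y + r) = d x y := by
  simp only [d, add_tsub_add_eq_tsub_right]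

lemma d_cons (u : {u : α // Irreducible u}) (x y : Fac α) :
    d (u ::ₘ x) (u ::ₘ y) = d x y := by
  rw [← Multiset.singleton_add, ← Multiset.singleton_add, d_add_left]

lemma d_le_card (x y : Fac α) (h : Multiset.card x = Multiset.card y) :
    d x y ≤ Multiset.card y := by
  letI := Classical.decEq {u : α // Irreducible u}
  simp only [d]
  exact max_le (le_trans (Multiset.card_le_card tsub_le_self) h.le)
    (Multiset.card_le_card tsub_le_self)

/-- An inductive (reflexive-transitive) presentation of chains in `Z a`. -/
inductive Chh (a : α) (P : Fac α → Fac α → Prop) (z : Fac α) : Fac α → Prop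
  | refl (hz : z ∈ Z a) : Chh a P z z
  | tail {z' z'' : Fac α} : Chh a P z z' → z'' ∈ Z a → P z' z'' → Chh a P z z''

lemma Chh.mem_right {a : α} {P} {z z' : Fac α} (h : Chh a P z z') : z' ∈ Z a := by
  induction h with
  | refl hz => exact hz
  | tail _ hz'' _ _ => exact hz''

lemma Chh.trans {a : α} {P} {z z' z'' : Fac α} (h : Chh a P z z')
    (h' : Chh a P z' z'') : Chh a P z z'' := by
  induction h' with
  | refl _ => exact h
  | tail _ hz p ih => exact Chh.tail ih hz p

lemma Chh.toChain {a : α} {P} {z z' : Fac α} (h : Chh a P z z') : Chain a P z z' := by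
  induction h with
  | refl hz => exact ⟨0, fun _ => z, rfl, rfl, fun _ => hz, fun i => i.elim0⟩
  | @tail w w' h1 hz p ih =>
    obtain ⟨n, c, h0, hl, hmem, hstep⟩ := ih
    refine ⟨n + 1, Fin.snoc c w', ?_, ?_, ?_, ?_⟩
    · rw [show (0 : Fin (n + 2)) = Fin.castSucc 0 by rfl, Fin.snoc_castSucc]; exact h0
    · simp
    · intro i
      refine Fin.lastCases ?_ (fun j => ?_) i
      · simpa using hz
      · simpa [Fin.snoc_castSucc] using hmem j
    · intro i
      refine Fin.lastCases ?_ (fun j => ?_) i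
      · rw [Fin.succ_last, Fin.snoc_last, Fin.snoc_castSucc, hl]; exact p
      · rw [Fin.succ_castSucc, Fin.snoc_castSucc, Fin.snoc_castSucc]
        exact hstep j

lemma chain_aux {a : α} {P : Fac α → Fac α → Prop} :
    ∀ n (c : Fin (n + 1) → Fac α), (∀ i, c i ∈ Z a) →
      (∀ i : Fin n, P (c i.castSucc) (c i.succ)) → Chh a P (c 0) (c (Fin.last n))
  | 0, c, hmem, _ => by simpa using Chh.refl (P := P) (hmem 0)
  | n + 1, c, hmem, hstep => by
    have ih := chain_aux n (fun i => c i.castSucc) (fun i => hmem _)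
      (fun i => by have h := hstep i.castSucc; rw [Fin.succ_castSucc] at h; exact h)
    have h1 : Chh a P (c 0) (c (Fin.last n).castSucc) := by simpa using ih
    have h2 := hstep (Fin.last n)
    rw [Fin.succ_last] at h2
    exact Chh.tail h1 (hmem _) h2

lemma Chain.toChh {a : α} {P} {z z' : Fac α} (h : Chain a P z z') : Chh a P z z' := by
  obtain ⟨n, c, h0, hl, hmem, hstep⟩ := h
  have := chain_aux n c hmem hstep
  rwa [h0, hl] at this

lemma relMonEq_add {q r : Fac α × Fac α} (hq : q ∈ relMonEq α) (hr : r ∈ relMonEq α) :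
    q + r ∈ relMonEq α := by
  obtain ⟨hq1, hq2⟩ := hq
  obtain ⟨hr1, hr2⟩ := hr
  constructor
  · show piF (q.1 + r.1) = piF (q.2 + r.2)
    rw [piF_add, piF_add, hq1, hr1]
  · show Multiset.card (q.1 + r.1) = Multiset.card (q.2 + r.2)
    simp [hq2, hr2]

lemma zero_mem_relMonEq : (0 : Fac α × Fac α) ∈ relMonEq α := ⟨rfl, rfl⟩

lemma exists_atom_decomp :
    ∀ n (p : Fac α × Fac α), Multiset.card p.1 = n → p ∈ relMonEq α → p ≠ 0 →
      ∃ q r, IsAtomIn (relMonEq α) q ∧ r ∈ relMonEq α ∧ p = q + r := by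
  intro n
  induction n using Nat.strong_induction_on with
  | _ n ih =>
    intro p hc hp hp0
    by_cases hA : ∀ q ∈ relMonEq α, ∀ r ∈ relMonEq α, p = q + r → q = 0 ∨ r = 0
    · exact ⟨p, 0, ⟨hp, hp0, hA⟩, zero_mem_relMonEq, by simp⟩
    · push_neg at hA
      obtain ⟨q, hq, r, hr, hpq, hq0, hr0⟩ := hA
      have hr1 : r.1 ≠ 0 := by
        intro h
        apply hr0
        have h2 : Multiset.card r.2 = 0 := by rw [← hr.2, h]; rfl
        exact Prod.ext h (Multiset.card_eq_zero.mp h2)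
      have hlt : Multiset.card q.1 < n := by
        have h1 : p.1 = q.1 + r.1 := by rw [hpq]; rfl
        have h2 : 0 < Multiset.card r.1 := Multiset.card_pos.mpr hr1
        rw [h1, Multiset.card_add] at hc
        omega
      obtain ⟨x, s, hx, hs, hqs⟩ := ih _ hlt q rfl hq hq0
      exact ⟨x, s + r, hx, relMonEq_add hs hr, by rw [hpq, hqs, add_assoc]⟩

/-- The step predicate of equal-length `N`-chains. -/
abbrev Ep (S : ℕ∞) (x y : Fac α) : Prop :=
  (d x y : ℕ∞) ≤ S ∧ Multiset.card x = Multiset.card y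

lemma mainChain {S : ℕ∞}
    (hS : ∀ p : Fac α × Fac α, IsAtomIn (relMonEq α) p →
      ¬ RRelEq (piF p.1) p.1 p.2 → (Multiset.card p.2 : ℕ∞) ≤ S) :
    ∀ n (a : α) (z z' : Fac α), z ∈ Z a → z' ∈ Z a →
      Multiset.card z = n → Multiset.card z' = n → Chh a (Ep S) z z' := by
  classical
  intro n
  induction n using Nat.strong_induction_on with
  | _ n ih =>
    -- the shared-atom reduction
    have shared : ∀ (a : α) (z z' : Fac α), z ∈ Z a → z' ∈ Z a →
        Multiset.card z = n → Multiset.card z' = n →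
        (∃ u, u ∈ z ∧ u ∈ z') → Chh a (Ep S) z z' := by
      intro a z z' hz hz' hcz hcz' hex
      obtain ⟨u, huz, huz'⟩ := hex
      have hn : 0 < n := hcz ▸ Multiset.card_pos_iff_exists_mem.mpr ⟨u, huz⟩
      obtain ⟨m, rfl⟩ : ∃ m, n = m + 1 := ⟨n - 1, by omega⟩
      set w := z.erase u with hw_def
      set w' := z'.erase u with hw'_def
      have hz_eq : z = u ::ₘ w := (Multiset.cons_erase huz).symm
      have hz'_eq : z' = u ::ₘ w' := (Multiset.cons_erase huz').symm
      have hpw : u.val * piF w = a := by rw [← piF_cons, ← hz_eq]; exact hz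
      have hpw' : u.val * piF w' = a := by rw [← piF_cons, ← hz'_eq]; exact hz'
      have hww' : piF w' = piF w := mul_left_cancel (by rw [hpw, hpw'])
      have hcw : Multiset.card w = m := by
        have := hcz; rw [hz_eq, Multiset.card_cons] at this; omega
      have hcw' : Multiset.card w' = m := by
        have := hcz'; rw [hz'_eq, Multiset.card_cons] at this; omega
      have hch := ih m (Nat.lt_succ_self m) (piF w) w w' rfl hww' hcw hcw'
      have lift : ∀ {y : Fac α}, Chh (piF w) (Ep S) w y →
          Chh a (Ep S) (u ::ₘ w) (u ::ₘ y) := by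
        intro y h
        induction h with
        | refl _ => exact Chh.refl (mem_Z.mpr (by rw [piF_cons]; exact hpw))
        | @tail c c' h1 hmem hp ihh =>
          refine Chh.tail ihh (mem_Z.mpr ?_) ⟨?_, ?_⟩
          · rw [piF_cons, mem_Z.mp hmem]; exact hpw
          · rw [d_cons]; exact hp.1
          · simp [hp.2]
      have := lift hch
      rwa [← hz_eq, ← hz'_eq] at this
    intro a z z' hz hz' hcz hcz'
    by_cases hzz : z = z'
    · subst hzz; exact Chh.refl hz
    by_cases hshare : ∃ u, u ∈ z ∧ u ∈ z'
    · exact shared a z z' hz hz' hcz hcz' hshare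
    have hrel : (z, z') ∈ relMonEq α :=
      ⟨(mem_Z.mp hz).trans (mem_Z.mp hz').symm, hcz.trans hcz'.symm⟩
    have hp0 : (z, z') ≠ 0 := by
      intro h
      rw [Prod.ext_iff] at h
      exact hzz (h.1.trans h.2.symm)
    obtain ⟨q, r, hqatom, hr, hqr⟩ := exists_atom_decomp (Multiset.card z) (z, z') rfl hrel hp0
    have hz_eq : z = q.1 + r.1 := congrArg Prod.fst hqr
    have hz'_eq : z' = q.2 + r.2 := congrArg Prod.snd hqr
    have hxy : piF q.1 = piF q.2 := hqatom.1.1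
    have hcxy : Multiset.card q.1 = Multiset.card q.2 := hqatom.1.2
    have hx0 : q.1 ≠ 0 := by
      intro h
      apply hqatom.2.1
      have h2 : Multiset.card q.2 = 0 := by rw [← hcxy, h]; rfl
      exact Prod.ext h (Multiset.card_eq_zero.mp h2)
    have hy0 : q.2 ≠ 0 := by
      intro h
      apply hqatom.2.1
      have h2 : Multiset.card q.1 = 0 := by rw [hcxy, h]; rfl
      exact Prod.ext (Multiset.card_eq_zero.mp h2) h
    have hwZ : (q.2 + r.1) ∈ Z a := by
      rw [mem_Z, piF_add, ← hxy, ← piF_add, ← hz_eq]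
      exact hz
    have hcw : Multiset.card (q.2 + r.1) = n := by
      rw [Multiset.card_add, ← hcxy, ← Multiset.card_add, ← hz_eq]
      exact hcz
    obtain ⟨u0, hu0⟩ := Multiset.exists_mem_of_ne_zero hy0
    have step2 : Chh a (Ep S) (q.2 + r.1) z' := by
      refine shared a _ z' hwZ hz' hcw hcz' ⟨u0, Multiset.mem_add.mpr (Or.inl hu0), ?_⟩
      rw [hz'_eq]
      exact Multiset.mem_add.mpr (Or.inl hu0)
    have memlift : ∀ {c : Fac α}, c ∈ Z (piF q.1) → (c + r.1) ∈ Z a := by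
      intro c hc
      rw [mem_Z, piF_add, mem_Z.mp hc, ← piF_add, ← hz_eq]
      exact hz
    by_cases hR : RRelEq (piF q.1) q.1 q.2
    · -- the atom's components are connected by an equal-length R-chain
      have hchxy : Chh (piF q.1)
          (fun x y => RStep x y ∧ Multiset.card x = Multiset.card y) q.1 q.2 :=
        Chain.toChh hR
      have hn1 : Multiset.card (q.1 + r.1) = n := by rw [← hz_eq]; exact hcz
      have key : ∀ {c' : Fac α}, Chh (piF q.1)
          (fun x y => RStep x y ∧ Multiset.card x = Multiset.card y) q.1 c' →
          Chh a (Ep S) (q.1 + r.1) (c' + r.1) ∧ Multiset.card (c' + r.1) = n := by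
        intro c' h
        induction h with
        | refl _ => exact ⟨Chh.refl (memlift (mem_Z.mpr rfl)), hn1⟩
        | @tail c2 c3 h1 hmem hp ihh =>
          obtain ⟨ch1, hcard⟩ := ihh
          obtain ⟨⟨u', hu1, hu2⟩, hcc⟩ := hp
          have hcard2 : Multiset.card (c3 + r.1) = n := by
            rw [Multiset.card_add, ← hcc, ← Multiset.card_add]; exact hcard
          have hm2 : (c2 + r.1) ∈ Z a := memlift h1.mem_right
          have hm3 : (c3 + r.1) ∈ Z a := memlift hmem
          refine ⟨ch1.trans (shared a _ _ hm2 hm3 hcard hcard2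
            ⟨u', Multiset.mem_add.mpr (Or.inl hu1), Multiset.mem_add.mpr (Or.inl hu2)⟩),
            hcard2⟩
      have hkey := (key hchxy).1
      rw [← hz_eq] at hkey
      exact hkey.trans step2
    · -- the atom contributes a single step of distance at most `S`
      have hyS : (Multiset.card q.2 : ℕ∞) ≤ S := hS q hqatom hR
      have hd : (d z (q.2 + r.1) : ℕ∞) ≤ S := by
        refine le_trans ?_ hyS
        rw [Nat.cast_le, hz_eq, d_add_right]
        exact d_le_card q.1 q.2 hcxy
      have hcweq : Multiset.card z = Multiset.card (q.2 + r.1) := by rw [hcz, hcw]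
      have step1 : Chh a (Ep S) z (q.2 + r.1) :=
        Chh.tail (Chh.refl hz) hwZ ⟨hd, hcweq⟩
      exact step1.trans step2

end Aux

/-- Let `H` be a reduced, commutative, cancellative, atomic monoid. Then
`c_eq(H) ≤ sup{|y| : (x, y) ∈ A(∼_{H,eq}), x and y not ≈_eq-related}`. -/
theorem stmt12 {α : Type*} [CancelCommMonoid α]
    (hred : Reduced α) (hatomic : Atomic α) :
    ceqH α ≤ sSup {r : ℕ∞ | ∃ p : Fac α × Fac α, IsAtomIn (relMonEq α) p ∧
      ¬ RRelEq (piF p.1) p.1 p.2 ∧ r = (Multiset.card p.2 : ℕ∞)} := by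
  classical
  set S := sSup {r : ℕ∞ | ∃ p : Fac α × Fac α, IsAtomIn (relMonEq α) p ∧
      ¬ RRelEq (piF p.1) p.1 p.2 ∧ r = (Multiset.card p.2 : ℕ∞)} with hSdef
  have hS : ∀ p : Fac α × Fac α, IsAtomIn (relMonEq α) p →
      ¬ RRelEq (piF p.1) p.1 p.2 → (Multiset.card p.2 : ℕ∞) ≤ S :=
    fun p h1 h2 => le_sSup ⟨p, h1, h2, rfl⟩
  refine iSup_le fun a => sInf_le ?_
  intro z hz z' hz' hcard
  exact (mainChain hS (Multiset.card z) a z z' hz hz' rfl hcard.symm).toChain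


end CMR
end

section
/- There exists a reduced, commutative, cancellative, atomic monoid H that is tame (t(H) < ∞) but satisfies c_eq(H) = ∞ (and hence c_mon(H) = ∞), while c_adj(H) < ∞ (indeed c_adj(H) ≤ 6). -/
namespace CMR

variable {α : Type*} [CancelCommMonoid α]

namespace W
open Multiset
def mE (k : ℕ) : ℤ := 3 ^ ((k + 1) ^ 2)
def MS : Set ℤ := {v : ℤ | ∃ k : ℕ, v = mE k ∨ v = -mE k}
def M2 : Set ℤ := {v : ℤ | ∃ p ∈ MS, ∃ q ∈ MS, v = p + q}
def AS : Set (ℤ × ℤ) := {p : ℤ × ℤ | (p.2 = 1 ∧ p.1 ∈ MS) ∨ (p.2 = 2 ∧ p.1 ∉ M2)}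
def H : AddSubmonoid (ℤ × ℤ) := AddSubmonoid.closure AS
instance : AddCancelCommMonoid H :=
  Function.Injective.addCancelCommMonoid Subtype.val Subtype.val_injective rfl (fun _ _ => rfl)
    (fun _ _ => rfl)
abbrev G : Type := Multiplicative H
def av (a : G) : ℤ × ℤ := (Multiplicative.toAdd a : H).val
lemma av_mul (a b : G) : av (a * b) = av a + av b := rfl
lemma av_one : av 1 = 0 := rfl
lemma av_inj : Function.Injective av := fun a b h => by
  have : (Multiplicative.toAdd a : H) = (Multiplicative.toAdd b : H) := Subtype.ext h
  exact Multiplicative.toAdd.injective this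
lemma AS_sub_H : AS ⊆ (H : Set (ℤ × ℤ)) := AddSubmonoid.subset_closure
def gg (p : ℤ × ℤ) (hp : p ∈ H) : G := Multiplicative.ofAdd ⟨p, hp⟩
lemma av_gg (p : ℤ × ℤ) (hp : p ∈ H) : av (gg p hp) = p := rfl
lemma H_rep {p : ℤ × ℤ} (hp : p ∈ H) :
    ∃ Y : Multiset (ℤ × ℤ), (∀ q ∈ Y, q ∈ AS) ∧ Y.sum = p := by
  induction hp using AddSubmonoid.closure_induction with
  | mem x hx => exact ⟨{x}, by simpa using hx, by simp⟩
  | zero => exact ⟨0, by simp, rfl⟩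
  | add x y hx hy ihx ihy =>
      obtain ⟨Y1, h1, e1⟩ := ihx
      obtain ⟨Y2, h2, e2⟩ := ihy
      exact ⟨Y1 + Y2, fun q hq => by rcases mem_add.1 hq with h | h; exacts [h1 q h, h2 q h],
        by simp [e1, e2]⟩

-- NEW PART
lemma mE_pos (k : ℕ) : 0 < mE k := by unfold mE; positivity

lemma AS_snd {p : ℤ × ℤ} (hp : p ∈ AS) : p.2 = 1 ∨ p.2 = 2 := by
  rcases hp with ⟨h, _⟩ | ⟨h, _⟩ <;> [left; right] <;> exact h

lemma AS_snd_pos {p : ℤ × ℤ} (hp : p ∈ AS) : 1 ≤ p.2 := by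
  rcases AS_snd hp with h | h <;> omega

/-- second coordinate of the sum of an `AS`-multiset: between card and 2·card -/
lemma sum_snd_ge {Y : Multiset (ℤ × ℤ)} (hY : ∀ q ∈ Y, q ∈ AS) :
    (Multiset.card Y : ℤ) ≤ Y.sum.2 := by
  induction Y using Multiset.induction with
  | empty => simp
  | cons a s ih =>
      have ha := AS_snd_pos (hY a (mem_cons_self a s))
      have := ih (fun q hq => hY q (mem_cons_of_mem hq))
      simp only [sum_cons, card_cons, Prod.snd_add]
      push_cast
      omega

lemma H_snd_zero {p : ℤ × ℤ} (hp : p ∈ H) (h2 : p.2 = 0) : p = 0 := by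
  obtain ⟨Y, hY, hs⟩ := H_rep hp
  have hc := sum_snd_ge hY
  rw [hs, h2] at hc
  have : Multiset.card Y = 0 := by exact_mod_cast le_antisymm (by exact_mod_cast hc) (Nat.zero_le _)
  rw [card_eq_zero] at this
  rw [← hs, this]; rfl

lemma H_snd_nonneg {p : ℤ × ℤ} (hp : p ∈ H) : 0 ≤ p.2 := by
  obtain ⟨Y, hY, hs⟩ := H_rep hp
  have := sum_snd_ge hY
  rw [hs] at this
  have : (0:ℤ) ≤ (Multiset.card Y : ℤ) := by positivity
  omega

lemma H_snd_one {p : ℤ × ℤ} (hp : p ∈ H) (h2 : p.2 = 1) : p.1 ∈ MS := by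
  obtain ⟨Y, hY, hs⟩ := H_rep hp
  -- Y must be a singleton
  rcases Y.empty_or_exists_mem with he | ⟨a, ha⟩
  · rw [he] at hs; simp at hs; rw [← hs] at h2; simp at h2
  · obtain ⟨Y', rfl⟩ := exists_cons_of_mem ha
    have ha' := hY a (mem_cons_self a Y')
    have hY' : ∀ q ∈ Y', q ∈ AS := fun q hq => hY q (mem_cons_of_mem hq)
    have h1 := AS_snd_pos ha'
    have h3 := sum_snd_ge hY'
    simp only [sum_cons, Prod.snd_add] at hs
    have hcz : (Multiset.card Y' : ℤ) = 0 := by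
      have := congrArg Prod.snd hs
      simp only [Prod.snd_add] at this
      have h0 : (0:ℤ) ≤ (Multiset.card Y' : ℤ) := by positivity
      omega
    have : Y' = 0 := by rw [← card_eq_zero]; exact_mod_cast hcz
    subst this
    simp only [sum_cons, sum_zero, add_zero] at hs
    subst hs
    rcases ha' with ⟨_, hm⟩ | ⟨hz, _⟩
    · exact hm
    · rw [hz] at h2; exact absurd h2 (by norm_num)

lemma isUnit_iff_G {a : G} : IsUnit a ↔ a = 1 := by
  constructor
  · rintro ⟨u, rfl⟩
    have h1 : av (u : G) + av (↑u⁻¹ : G) = 0 := by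
      rw [← av_mul]; simp [av_one]
    have hu := H_snd_nonneg (Multiplicative.toAdd (u:G) : H).2
    have hv := H_snd_nonneg (Multiplicative.toAdd (↑u⁻¹:G) : H).2
    have h2 : av (u : G) ∈ H := (Multiplicative.toAdd (u:G) : H).2
    have hsnd : (av (u:G)).2 = 0 := by
      have := congrArg Prod.snd h1
      simp only [Prod.snd_add, Prod.snd_zero] at this
      change 0 ≤ (av (u:G)).2 at hu
      change 0 ≤ (av (↑u⁻¹:G)).2 at hv
      omega
    have := H_snd_zero h2 hsnd
    apply av_inj
    rw [this, av_one]
  · rintro rfl; exact isUnit_one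

lemma not_isUnit_of_av {a : G} (h : av a ≠ 0) : ¬ IsUnit a := by
  intro hu
  exact h (by rw [isUnit_iff_G.1 hu, av_one])

lemma irr_of_AS {p : ℤ × ℤ} (hp : p ∈ AS) : Irreducible (gg p (AS_sub_H hp)) := by
  constructor
  · apply not_isUnit_of_av
    rw [av_gg]
    intro h
    have := AS_snd_pos hp
    rw [h] at this
    simp at this
  · intro x y hxy
    have hsum : av x + av y = p := by rw [← av_mul, ← hxy, av_gg]
    have hx2 := H_snd_nonneg (Multiplicative.toAdd x : H).2
    have hy2 := H_snd_nonneg (Multiplicative.toAdd y : H).2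
    change 0 ≤ (av x).2 at hx2
    change 0 ≤ (av y).2 at hy2
    have hxH : av x ∈ H := (Multiplicative.toAdd x : H).2
    have hyH : av y ∈ H := (Multiplicative.toAdd y : H).2
    have hsnd : (av x).2 + (av y).2 = p.2 := by
      have := congrArg Prod.snd hsum; simpa using this
    rcases hp with ⟨h2, hm⟩ | ⟨h2, hm⟩
    · -- p.2 = 1 : one of them has snd 0
      rw [h2] at hsnd
      rcases (show (av x).2 = 0 ∨ (av y).2 = 0 by omega) with h | h
      · left; rw [isUnit_iff_G]; apply av_inj; rw [av_one]; exact H_snd_zero hxH h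
      · right; rw [isUnit_iff_G]; apply av_inj; rw [av_one]; exact H_snd_zero hyH h
    · -- p.2 = 2
      rw [h2] at hsnd
      by_cases hx0 : (av x).2 = 0
      · left; rw [isUnit_iff_G]; apply av_inj; rw [av_one]; exact H_snd_zero hxH hx0
      by_cases hy0 : (av y).2 = 0
      · right; rw [isUnit_iff_G]; apply av_inj; rw [av_one]; exact H_snd_zero hyH hy0
      · exfalso
        have hx1 : (av x).2 = 1 := by omega
        have hy1 : (av y).2 = 1 := by omega
        apply hm
        exact ⟨(av x).1, H_snd_one hxH hx1, (av y).1, H_snd_one hyH hy1,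
          by have := congrArg Prod.fst hsum; simpa using this.symm⟩

lemma sum_mem_H {Y : Multiset (ℤ × ℤ)} (hY : ∀ q ∈ Y, q ∈ AS) : Y.sum ∈ H :=
  AddSubmonoid.multiset_sum_mem H Y (fun x hx => AS_sub_H (hY x hx))

lemma av_mem_H (a : G) : av a ∈ H := (Multiplicative.toAdd a : H).2

lemma irr_iff {a : G} : Irreducible a ↔ av a ∈ AS := by
  constructor
  · intro ha
    obtain ⟨Y, hY, hs⟩ := H_rep (av_mem_H a)
    have hsa : Y.sum = av a := hs
    rcases Y.empty_or_exists_mem with he | ⟨q, hq⟩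
    · exfalso
      rw [he] at hsa; simp at hsa
      exact ha.not_isUnit (isUnit_iff_G.2 (av_inj (by rw [av_one, ← hsa])))
    · obtain ⟨Y', rfl⟩ := exists_cons_of_mem hq
      have hqAS := hY q (mem_cons_self q Y')
      have hY' : ∀ r ∈ Y', r ∈ AS := fun r hr => hY r (mem_cons_of_mem hr)
      rcases Y'.empty_or_exists_mem with he' | ⟨r, hr⟩
      · rw [he'] at hsa; simp at hsa
        rwa [← hsa]
      · exfalso
        have hYH : Y'.sum ∈ H := sum_mem_H hY'
        have hfac : a = gg q (AS_sub_H hqAS) * gg Y'.sum hYH := by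
          apply av_inj
          rw [av_mul, av_gg, av_gg, ← hsa, sum_cons]
        rcases ha.isUnit_or_isUnit hfac with hu | hu
        · have := isUnit_iff_G.1 hu
          have : q = 0 := by
            have h0 := congrArg av this; rw [av_gg, av_one] at h0; exact h0
          have h1 := AS_snd_pos hqAS
          rw [this] at h1
          simp at h1
        · have := isUnit_iff_G.1 hu
          have h0 : Y'.sum = 0 := by
            have h0 := congrArg av this; rw [av_gg, av_one] at h0; exact h0
          have hc := sum_snd_ge hY'
          rw [h0] at hc
          simp only [Prod.snd_zero] at hc
          have hcz : Multiset.card Y' = 0 := by omega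
          rw [card_eq_zero] at hcz
          rw [hcz] at hr
          simp at hr
  · intro h
    have he : a = gg (av a) (AS_sub_H h) := av_inj (by rw [av_gg])
    rw [he]
    exact irr_of_AS h

abbrev Atm : Type := {u : G // Irreducible u}

noncomputable def avv (u : Atm) : ℤ × ℤ := av u.1

lemma avv_AS (u : Atm) : avv u ∈ AS := irr_iff.1 u.2

lemma avv_inj : Function.Injective avv := fun u v h => Subtype.ext (av_inj h)

lemma m3_MS : (3 : ℤ) ∈ MS := ⟨0, Or.inl (by norm_num [mE])⟩

lemma m3_AS : ((3, 1) : ℤ × ℤ) ∈ AS := Or.inl ⟨rfl, m3_MS⟩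

open scoped Classical in
noncomputable def elt (p : ℤ × ℤ) : Atm :=
  if hp : p ∈ AS then ⟨gg p (AS_sub_H hp), irr_iff.2 (by rwa [av_gg])⟩
  else ⟨gg (3,1) (AS_sub_H m3_AS), irr_iff.2 (by rw [av_gg]; exact m3_AS)⟩

lemma avv_elt {p : ℤ × ℤ} (hp : p ∈ AS) : avv (elt p) = p := by
  unfold elt
  split
  · rfl
  · exact absurd hp (by assumption)

lemma elt_avv (u : Atm) : elt (avv u) = u := by
  apply avv_inj
  rw [avv_elt (avv_AS u)]

def Good (Y : Multiset (ℤ × ℤ)) : Prop := ∀ q ∈ Y, q ∈ AS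

noncomputable def zOf (Y : Multiset (ℤ × ℤ)) : Fac G := Y.map elt

lemma vals_zOf {Y : Multiset (ℤ × ℤ)} (hY : Good Y) : (zOf Y).map avv = Y := by
  unfold zOf
  rw [Multiset.map_map]
  exact Multiset.map_congr rfl (fun p hp => avv_elt (hY p hp)) |>.trans (Multiset.map_id _)

lemma zOf_vals (z : Fac G) : zOf (z.map avv) = z := by
  unfold zOf
  rw [Multiset.map_map]
  exact Multiset.map_congr rfl (fun u _ => elt_avv u) |>.trans (Multiset.map_id _)

lemma good_vals (z : Fac G) : Good (z.map avv) := by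
  intro q hq
  rw [Multiset.mem_map] at hq
  obtain ⟨u, _, rfl⟩ := hq
  exact avv_AS u

lemma card_zOf (Y : Multiset (ℤ × ℤ)) : Multiset.card (zOf Y) = Multiset.card Y :=
  Multiset.card_map _ _

lemma av_piF (z : Fac G) : av (piF z) = (z.map avv).sum := by
  induction z using Multiset.induction with
  | empty => simp [piF, av_one]
  | cons u s ih =>
      simp only [piF, Multiset.map_cons, Multiset.prod_cons, Multiset.sum_cons, av_mul]
      rw [← ih]
      rfl

lemma mem_Z_iff {a : G} {z : Fac G} : z ∈ Z a ↔ (z.map avv).sum = av a := by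
  constructor
  · intro h
    rw [← av_piF, h]
  · intro h
    exact av_inj (by rw [av_piF, h])

lemma zOf_mem_Z {a : G} {Y : Multiset (ℤ × ℤ)} (hY : Good Y) :
    zOf Y ∈ Z a ↔ Y.sum = av a := by
  rw [mem_Z_iff, vals_zOf hY]

lemma count_zOf {Y : Multiset (ℤ × ℤ)} (hY : Good Y) (u : Atm) :
    Multiset.count u (zOf Y) = Multiset.count (avv u) Y := by
  classical
  unfold zOf
  rw [Multiset.count_map]
  rw [Multiset.count_eq_card_filter_eq]
  congr 1
  apply Multiset.filter_congr
  intro p hp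
  constructor
  · intro h
    rw [← avv_elt (hY p hp), h]
  · intro h
    rw [← h, elt_avv]

section Toolkit

lemma d_def (z z' : Fac G) (inst : DecidableEq Atm) :
    d z z' = (letI := inst; max (Multiset.card (z - z')) (Multiset.card (z' - z))) := by
  unfold d
  have h : (Classical.decEq {u : G // Irreducible u}) = inst := Subsingleton.elim _ _
  rw [h]

open scoped Classical in
lemma good_sub {Y Y' : Multiset (ℤ × ℤ)} (hY : Good Y) : Good (Y - Y') :=
  fun q hq => hY q (Multiset.mem_of_le (Multiset.sub_le_self _ _) hq)

open scoped Classical in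
lemma sub_zOf {Y Y' : Multiset (ℤ × ℤ)} (hY : Good Y) (hY' : Good Y') :
    zOf Y - zOf Y' = zOf (Y - Y') := by
  ext u
  rw [Multiset.count_sub, count_zOf hY, count_zOf hY', count_zOf (good_sub hY),
    Multiset.count_sub]

open scoped Classical in
lemma d_zOf {Y Y' : Multiset (ℤ × ℤ)} (hY : Good Y) (hY' : Good Y') :
    d (zOf Y) (zOf Y') = max (Multiset.card (Y - Y')) (Multiset.card (Y' - Y)) := by
  rw [d_def _ _ inferInstance, sub_zOf hY hY', sub_zOf hY' hY, card_zOf, card_zOf]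

open scoped Classical in
lemma d_le_max_card (z z' : Fac G) :
    d z z' ≤ max (Multiset.card z) (Multiset.card z') := by
  rw [d_def _ _ inferInstance]
  exact max_le_max (Multiset.card_le_card (Multiset.sub_le_self _ _))
    (Multiset.card_le_card (Multiset.sub_le_self _ _))

open scoped Classical in
lemma add_sub_add (R A T : Multiset (ℤ × ℤ)) : (R + T) - (A + T) = R - A := by
  ext q
  simp only [Multiset.count_sub, Multiset.count_add]
  omega

lemma good_add {R T : Multiset (ℤ × ℤ)} (hR : Good R) (hT : Good T) : Good (R + T) := by
  intro q hq
  rcases Multiset.mem_add.1 hq with h | h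
  exacts [hR q h, hT q h]

lemma good_add_left {R T : Multiset (ℤ × ℤ)} (h : Good (R + T)) : Good R :=
  fun q hq => h q (Multiset.mem_add.2 (Or.inl hq))

lemma good_add_right {R T : Multiset (ℤ × ℤ)} (h : Good (R + T)) : Good T :=
  fun q hq => h q (Multiset.mem_add.2 (Or.inr hq))

open scoped Classical in
lemma d_surgery {R A T : Multiset (ℤ × ℤ)} (hGR : Good (R + T)) (hGA : Good (A + T)) :
    d (zOf (R + T)) (zOf (A + T)) ≤ max (Multiset.card R) (Multiset.card A) := by
  rw [d_zOf hGR hGA, add_sub_add, add_sub_add]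
  exact max_le_max (Multiset.card_le_card (Multiset.sub_le_self _ _))
    (Multiset.card_le_card (Multiset.sub_le_self _ _))

lemma zOf_mem_Z_surgery {a : G} {R A T : Multiset (ℤ × ℤ)} (hGA : Good (A + T))
    (hsum : A.sum = R.sum) (hz : zOf (R + T) ∈ Z a) (hGR : Good (R + T)) :
    zOf (A + T) ∈ Z a := by
  rw [zOf_mem_Z hGA]
  rw [zOf_mem_Z hGR] at hz
  rw [Multiset.sum_add] at hz ⊢
  rw [hsum]
  exact hz

-- c/e parts
noncomputable def cN (Y : Multiset (ℤ × ℤ)) : ℕ :=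
  Multiset.card (Y.filter (fun p => p.2 = 1))

noncomputable def eN (Y : Multiset (ℤ × ℤ)) : ℕ :=
  Multiset.card (Y.filter (fun p => p.2 = 2))

lemma card_eq_cN_eN {Y : Multiset (ℤ × ℤ)} (hY : Good Y) :
    Multiset.card Y = cN Y + eN Y := by
  classical
  unfold cN eN
  induction Y using Multiset.induction with
  | empty => simp
  | cons a s ih =>
      have haAS := hY a (Multiset.mem_cons_self a s)
      have ih' := ih (fun q hq => hY q (Multiset.mem_cons_of_mem hq))
      rcases AS_snd haAS with h | h <;>
        simp [Multiset.filter_cons, h, ih'] <;> omega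

lemma sum_snd_eq {Y : Multiset (ℤ × ℤ)} (hY : Good Y) :
    Y.sum.2 = (cN Y : ℤ) + 2 * (eN Y : ℤ) := by
  classical
  unfold cN eN
  induction Y using Multiset.induction with
  | empty => simp
  | cons a s ih =>
      have haAS := hY a (Multiset.mem_cons_self a s)
      have ih' := ih (fun q hq => hY q (Multiset.mem_cons_of_mem hq))
      rcases AS_snd haAS with h | h <;>
        simp [Multiset.filter_cons, h, Multiset.sum_cons, ih'] <;> push_cast <;> omega

lemma AS_c {p : ℤ × ℤ} (hp : p ∈ AS) (h2 : p.2 = 1) : p.1 ∈ MS := by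
  rcases hp with ⟨_, hm⟩ | ⟨hq, _⟩
  · exact hm
  · rw [hq] at h2; exact absurd h2 (by norm_num)

lemma AS_e {p : ℤ × ℤ} (hp : p ∈ AS) (h2 : p.2 = 2) : p.1 ∉ M2 := by
  rcases hp with ⟨hq, _⟩ | ⟨_, hm⟩
  · rw [hq] at h2; exact absurd h2 (by norm_num)
  · exact hm

lemma ex_c {Y : Multiset (ℤ × ℤ)} (hY : Good Y) (h : 1 ≤ cN Y) :
    ∃ (x : ℤ) (T : Multiset (ℤ × ℤ)), Y = (x,1) ::ₘ T ∧ x ∈ MS ∧ Good T ∧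
      cN T + 1 = cN Y ∧ eN T = eN Y := by
  classical
  have : ∃ p ∈ Y.filter (fun p => p.2 = 1), True := by
    rcases Multiset.card_pos_iff_exists_mem.1 (by exact h) with ⟨p, hp⟩
    exact ⟨p, hp, trivial⟩
  obtain ⟨p, hp, -⟩ := this
  rw [Multiset.mem_filter] at hp
  obtain ⟨hpY, hp2⟩ := hp
  obtain ⟨T, rfl⟩ := Multiset.exists_cons_of_mem hpY
  have hpAS := hY p (Multiset.mem_cons_self p T)
  refine ⟨p.1, T, by rw [show ((p.1, 1) : ℤ × ℤ) = p from Prod.ext rfl hp2.symm], AS_c hpAS hp2,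
    fun q hq => hY q (Multiset.mem_cons_of_mem hq), ?_, ?_⟩
  · unfold cN; rw [Multiset.filter_cons, if_pos hp2]; simp
  · unfold eN; rw [Multiset.filter_cons, if_neg (by rw [hp2]; norm_num)]; simp

lemma ex_e {Y : Multiset (ℤ × ℤ)} (hY : Good Y) (h : 1 ≤ eN Y) :
    ∃ (j : ℤ) (T : Multiset (ℤ × ℤ)), Y = (j,2) ::ₘ T ∧ j ∉ M2 ∧ Good T ∧
      cN T = cN Y ∧ eN T + 1 = eN Y := by
  classical
  have : ∃ p ∈ Y.filter (fun p => p.2 = 2), True := by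
    rcases Multiset.card_pos_iff_exists_mem.1 (by exact h) with ⟨p, hp⟩
    exact ⟨p, hp, trivial⟩
  obtain ⟨p, hp, -⟩ := this
  rw [Multiset.mem_filter] at hp
  obtain ⟨hpY, hp2⟩ := hp
  obtain ⟨T, rfl⟩ := Multiset.exists_cons_of_mem hpY
  have hpAS := hY p (Multiset.mem_cons_self p T)
  refine ⟨p.1, T, by rw [show ((p.1, 2) : ℤ × ℤ) = p from Prod.ext rfl hp2.symm], AS_e hpAS hp2,
    fun q hq => hY q (Multiset.mem_cons_of_mem hq), ?_, ?_⟩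
  · unfold cN; rw [Multiset.filter_cons, if_neg (by rw [hp2]; norm_num)]; simp
  · unfold eN; rw [Multiset.filter_cons, if_pos hp2]; simp

lemma split2 (S : ℤ) : ∃ B : Multiset (ℤ × ℤ), Good B ∧ B.sum = (S, 2) ∧
    Multiset.card B ≤ 2 := by
  by_cases hS : S ∈ M2
  · obtain ⟨p, hp, q, hq, rfl⟩ := hS
    refine ⟨{(p,1), (q,1)}, ?_, by simp [Prod.ext_iff], by simp⟩
    intro r hr
    simp only [Multiset.insert_eq_cons, Multiset.mem_cons, Multiset.mem_singleton] at hr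
    rcases hr with rfl | rfl
    · exact Or.inl ⟨rfl, hp⟩
    · exact Or.inl ⟨rfl, hq⟩
  · exact ⟨{(S, 2)}, fun r hr => by
      rw [Multiset.mem_singleton] at hr; rw [hr]; exact Or.inr ⟨rfl, hS⟩,
      by simp, by simp⟩

end Toolkit

section Tame

lemma d_self (z : Fac G) : d z z = 0 := by
  classical
  rw [d_def _ _ inferInstance]
  simp

lemma elt_mem_zOf {q : ℤ × ℤ} {Y : Multiset (ℤ × ℤ)} (h : q ∈ Y) : elt q ∈ zOf Y :=
  Multiset.mem_map_of_mem _ h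

lemma do_surgery {a : G} {Y R T : Multiset (ℤ × ℤ)} (hY : Good Y) (hYRT : Y = R + T)
    (hz : zOf Y ∈ Z a) (q : ℤ × ℤ) (A₀ : Multiset (ℤ × ℤ)) (hGA : Good A₀) (hqAS : q ∈ AS)
    (hsum : q + A₀.sum = R.sum) :
    ∃ z' ∈ Z a, elt q ∈ z' ∧ d (zOf Y) z' ≤ max (Multiset.card R) (Multiset.card A₀ + 1) := by
  subst hYRT
  have hGqA : Good ((q ::ₘ A₀) + T) := by
    apply good_add _ (good_add_right hY)
    intro r hr
    rcases Multiset.mem_cons.1 hr with rfl | hr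
    exacts [hqAS, hGA r hr]
  refine ⟨zOf ((q ::ₘ A₀) + T), ?_, ?_, ?_⟩
  · exact zOf_mem_Z_surgery hGqA (by rw [Multiset.sum_cons, hsum]) hz hY
  · exact elt_mem_zOf (Multiset.mem_add.2 (Or.inl (Multiset.mem_cons_self _ _)))
  · have := d_surgery hY hGqA
    simpa using this

lemma tame_main (a : G) (u : Atm) (z : Fac G) (hz : z ∈ Z a) (w : Fac G)
    (hw : w ∈ Z a) (hu : u ∈ w) : ∃ z' ∈ Z a, u ∈ z' ∧ d z z' ≤ 4 := by
  classical
  by_cases huz : u ∈ z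
  · exact ⟨z, hz, huz, by rw [d_self]; omega⟩
  set Y : Multiset (ℤ × ℤ) := z.map avv with hYdef
  have hY : Good Y := good_vals z
  have hzY : z = zOf Y := (zOf_vals z).symm
  set Yw : Multiset (ℤ × ℤ) := w.map avv with hYwdef
  have hYw : Good Yw := good_vals w
  have hzZ : zOf Y ∈ Z a := by rw [← hzY]; exact hz
  set q := avv u with hqdef
  have hqAS : q ∈ AS := avv_AS u
  have hueq : u = elt q := (elt_avv u).symm
  -- t value
  have hsumY : Y.sum = av a := mem_Z_iff.1 hz
  have hsumYw : Yw.sum = av a := mem_Z_iff.1 hw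
  have ht : (cN Y : ℤ) + 2 * (eN Y : ℤ) = (av a).2 := by
    rw [← sum_snd_eq hY, hsumY]
  have htw : (cN Yw : ℤ) + 2 * (eN Yw : ℤ) = (av a).2 := by
    rw [← sum_snd_eq hYw, hsumYw]
  -- small fallback
  have small : (av a).2 ≤ 4 → ∃ z' ∈ Z a, u ∈ z' ∧ d z z' ≤ 4 := by
    intro h4
    refine ⟨w, hw, hu, ?_⟩
    have h1 : Multiset.card z ≤ 4 := by
      have : Multiset.card z = cN Y + eN Y := by
        rw [hzY, card_zOf]; exact card_eq_cN_eN hY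
      omega
    have h2 : Multiset.card w ≤ 4 := by
      have : Multiset.card w = cN Yw + eN Yw := by
        rw [show w = zOf Yw from (zOf_vals w).symm, card_zOf]; exact card_eq_cN_eN hYw
      omega
    calc d z w ≤ max (Multiset.card z) (Multiset.card w) := d_le_max_card z w
    _ ≤ 4 := by omega
  rcases AS_snd hqAS with hq2 | hq2
  · -- u is a c-atom (m, 1)
    set m := q.1 with hmdef
    have hqm : q = (m, 1) := Prod.ext rfl hq2
    by_cases hC3 : 3 ≤ cN Y
    · -- T1
      obtain ⟨x, T1, hY1, hxM, hG1, hc1, he1⟩ := ex_c hY (by omega)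
      obtain ⟨y, T2, hY2, hyM, hG2, hc2, he2⟩ := ex_c hG1 (by omega)
      obtain ⟨v, T3, hY3, hvM, hG3, hc3, he3⟩ := ex_c hG2 (by omega)
      obtain ⟨B, hGB, hBsum, hBcard⟩ := split2 (x + y + v - m)
      have hRT : Y = ({(x,1), (y,1), (v,1)} : Multiset (ℤ × ℤ)) + T3 := by
        rw [hY1, hY2, hY3]
        simp [Multiset.insert_eq_cons, Multiset.cons_add]
      obtain ⟨z', hz', hmem, hd⟩ := do_surgery hY hRT hzZ q B hGB hqAS
        (by rw [hBsum, hqm]; simp [Prod.ext_iff] <;> ring)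
      refine ⟨z', hz', by rw [hueq]; exact hmem, ?_⟩
      rw [hzY]
      calc d (zOf Y) z' ≤ max (Multiset.card ({(x,1), (y,1), (v,1)} : Multiset (ℤ × ℤ)))
            (Multiset.card B + 1) := hd
      _ ≤ 4 := by simp; omega
    · by_cases hF1 : 1 ≤ eN Y
      · by_cases hC2 : 2 ≤ cN Y
        · -- T2a : two c's and one e
          obtain ⟨x, T1, hY1, hxM, hG1, hc1, he1⟩ := ex_c hY (by omega)
          obtain ⟨y, T2, hY2, hyM, hG2, hc2, he2⟩ := ex_c hG1 (by omega)
          obtain ⟨i, T3, hY3, hiE, hG3, hc3, he3⟩ := ex_e hG2 (by omega)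
          obtain ⟨B, hGB, hBsum, hBcard⟩ := split2 (x + y + i - m - 3)
          have hRT : Y = ({(x,1), (y,1), (i,2)} : Multiset (ℤ × ℤ)) + T3 := by
            rw [hY1, hY2, hY3]
            simp [Multiset.insert_eq_cons, Multiset.cons_add]
          obtain ⟨z', hz', hmem, hd⟩ := do_surgery hY hRT hzZ q ((3,1) ::ₘ B)
            (by intro r hr
                rcases Multiset.mem_cons.1 hr with rfl | hr
                exacts [m3_AS, hGB r hr]) hqAS
            (by rw [Multiset.sum_cons, hBsum, hqm]; simp [Prod.ext_iff] <;> ring)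
          refine ⟨z', hz', by rw [hueq]; exact hmem, ?_⟩
          rw [hzY]
          refine le_trans hd (by simp <;> omega)
        · by_cases hC1 : 1 ≤ cN Y
          · -- T2b : one c and one e
            obtain ⟨x, T1, hY1, hxM, hG1, hc1, he1⟩ := ex_c hY (by omega)
            obtain ⟨i, T3, hY3, hiE, hG3, hc3, he3⟩ := ex_e hG1 (by omega)
            obtain ⟨B, hGB, hBsum, hBcard⟩ := split2 (x + i - m)
            have hRT : Y = ({(x,1), (i,2)} : Multiset (ℤ × ℤ)) + T3 := by
              rw [hY1, hY3]
              simp [Multiset.insert_eq_cons, Multiset.cons_add]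
            obtain ⟨z', hz', hmem, hd⟩ := do_surgery hY hRT hzZ q B hGB hqAS
              (by rw [hBsum, hqm]; simp [Prod.ext_iff] <;> ring)
            refine ⟨z', hz', by rw [hueq]; exact hmem, ?_⟩
            rw [hzY]
            refine le_trans hd (by simp <;> omega)
          · by_cases hF2 : 2 ≤ eN Y
            · -- T2c : two e's
              obtain ⟨i, T1, hY1, hiE, hG1, hc1, he1⟩ := ex_e hY (by omega)
              obtain ⟨i', T3, hY3, hiE', hG3, hc3, he3⟩ := ex_e hG1 (by omega)
              obtain ⟨B, hGB, hBsum, hBcard⟩ := split2 (i + i' - m - 3)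
              have hRT : Y = ({(i,2), (i',2)} : Multiset (ℤ × ℤ)) + T3 := by
                rw [hY1, hY3]
                simp [Multiset.insert_eq_cons, Multiset.cons_add]
              obtain ⟨z', hz', hmem, hd⟩ := do_surgery hY hRT hzZ q ((3,1) ::ₘ B)
                (by intro r hr
                    rcases Multiset.mem_cons.1 hr with rfl | hr
                    exacts [m3_AS, hGB r hr]) hqAS
                (by rw [Multiset.sum_cons, hBsum, hqm]; simp [Prod.ext_iff] <;> ring)
              refine ⟨z', hz', by rw [hueq]; exact hmem, ?_⟩
              rw [hzY]
              refine le_trans hd (by simp <;> omega)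
            · exact small (by omega)
      · exact small (by omega)
  · -- u is an e-atom (j, 2)
    set j := q.1 with hjdef
    have hqm : q = (j, 2) := Prod.ext rfl hq2
    by_cases hF2 : 2 ≤ eN Y
    · -- E1 : two e's
      obtain ⟨i, T1, hY1, hiE, hG1, hc1, he1⟩ := ex_e hY (by omega)
      obtain ⟨i', T3, hY3, hiE', hG3, hc3, he3⟩ := ex_e hG1 (by omega)
      obtain ⟨B, hGB, hBsum, hBcard⟩ := split2 (i + i' - j)
      have hRT : Y = ({(i,2), (i',2)} : Multiset (ℤ × ℤ)) + T3 := by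
        rw [hY1, hY3]
        simp [Multiset.insert_eq_cons, Multiset.cons_add]
      obtain ⟨z', hz', hmem, hd⟩ := do_surgery hY hRT hzZ q B hGB hqAS
        (by rw [hBsum, hqm]; simp [Prod.ext_iff] <;> ring)
      refine ⟨z', hz', by rw [hueq]; exact hmem, ?_⟩
      rw [hzY]
      refine le_trans hd (by simp <;> omega)
    · by_cases hFC : 1 ≤ eN Y ∧ 2 ≤ cN Y
      · -- E2
        obtain ⟨x, T1, hY1, hxM, hG1, hc1, he1⟩ := ex_c hY (by omega)
        obtain ⟨y, T2, hY2, hyM, hG2, hc2, he2⟩ := ex_c hG1 (by omega)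
        obtain ⟨i, T3, hY3, hiE, hG3, hc3, he3⟩ := ex_e hG2 (by omega)
        obtain ⟨B, hGB, hBsum, hBcard⟩ := split2 (x + y + i - j)
        have hRT : Y = ({(x,1), (y,1), (i,2)} : Multiset (ℤ × ℤ)) + T3 := by
          rw [hY1, hY2, hY3]
          simp [Multiset.insert_eq_cons, Multiset.cons_add]
        obtain ⟨z', hz', hmem, hd⟩ := do_surgery hY hRT hzZ q B hGB hqAS
          (by rw [hBsum, hqm]; simp [Prod.ext_iff] <;> ring)
        refine ⟨z', hz', by rw [hueq]; exact hmem, ?_⟩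
        rw [hzY]
        refine le_trans hd (by simp <;> omega)
      · by_cases hE3 : eN Y = 0 ∧ 4 ≤ cN Y
        · -- E3 : four c's
          obtain ⟨x, T1, hY1, hxM, hG1, hc1, he1⟩ := ex_c hY (by omega)
          obtain ⟨y, T2, hY2, hyM, hG2, hc2, he2⟩ := ex_c hG1 (by omega)
          obtain ⟨v, T3, hY3, hvM, hG3, hc3, he3⟩ := ex_c hG2 (by omega)
          obtain ⟨x', T4, hY4, hxM', hG4, hc4, he4⟩ := ex_c hG3 (by omega)
          obtain ⟨B, hGB, hBsum, hBcard⟩ := split2 (x + y + v + x' - j)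
          have hRT : Y = ({(x,1), (y,1), (v,1), (x',1)} : Multiset (ℤ × ℤ)) + T4 := by
            rw [hY1, hY2, hY3, hY4]
            simp [Multiset.insert_eq_cons, Multiset.cons_add]
          obtain ⟨z', hz', hmem, hd⟩ := do_surgery hY hRT hzZ q B hGB hqAS
            (by rw [hBsum, hqm]; simp [Prod.ext_iff] <;> ring)
          refine ⟨z', hz', by rw [hueq]; exact hmem, ?_⟩
          rw [hzY]
          refine le_trans hd (by simp <;> omega)
        · exact small (by omega)

lemma tH_le : tH G ≤ 4 := by
  refine iSup_le fun a => iSup_le fun u => ?_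
  refine sInf_le ?_
  intro z hz hex
  obtain ⟨w, hw, hle⟩ := hex
  obtain ⟨z', hz', hu, hd⟩ := tame_main a u z hz w hw (by simpa using hle)
  refine ⟨z', hz', by simpa using hu, ?_⟩
  exact_mod_cast Nat.cast_le.2 hd

lemma reduced_G : Reduced G := fun _ hu => isUnit_iff_G.1 hu

lemma atomic_G : Atomic G := fun a => by
  obtain ⟨Y, hY, hs⟩ := H_rep (av_mem_H a)
  exact ⟨zOf Y, av_inj (by rw [av_piF, vals_zOf hY, hs])⟩

end Tame

section Arith

lemma mE_ge (k : ℕ) : 3 ≤ mE k := by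
  unfold mE
  calc (3:ℤ) = 3^1 := by norm_num
  _ ≤ 3^((k+1)^2) := by
      apply pow_le_pow_right₀ (by norm_num)
      exact Nat.one_le_pow _ _ (by omega)

lemma mE_le_mono {k l : ℕ} (h : k ≤ l) : mE k ≤ mE l := by
  unfold mE
  apply pow_le_pow_right₀ (by norm_num)
  nlinarith

lemma mE_mono27 {k l : ℕ} (h : k < l) : 27 * mE k ≤ mE l := by
  unfold mE
  have he : (27:ℤ) * 3^((k+1)^2) = 3^((k+1)^2 + 3) := by ring
  rw [he]
  apply pow_le_pow_right₀ (by norm_num)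
  nlinarith

lemma le_mE_self (N : ℕ) : (N : ℤ) ≤ mE N := by
  unfold mE
  calc (N : ℤ) ≤ ((N+1)^2 : ℕ) := by push_cast; nlinarith
  _ ≤ 3^((N+1)^2) := by
      exact_mod_cast le_of_lt (Nat.lt_pow_self (a := 3) (by norm_num))

lemma exists_big (x : ℤ) : ∃ N : ℕ, x < mE N := by
  refine ⟨x.toNat + 1, ?_⟩
  have h1 : x ≤ (x.toNat : ℤ) := Int.self_le_toNat x
  have h2 := le_mE_self x.toNat
  have h3 := mE_mono27 (Nat.lt_succ_self x.toNat)
  have h4 := mE_pos x.toNat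
  linarith

lemma M2_cases {v : ℤ} (h : v ∈ M2) :
    ∃ a b : ℕ, b ≤ a ∧ (v = mE a + mE b ∨ v = mE a - mE b ∨
      v = -mE a + mE b ∨ v = -(mE a + mE b)) := by
  obtain ⟨p, ⟨a, hp⟩, q, ⟨b, hq⟩, rfl⟩ := h
  rcases le_total b a with hab | hab
  · refine ⟨a, b, hab, ?_⟩
    rcases hp with rfl | rfl <;> rcases hq with rfl | rfl
    · exact Or.inl rfl
    · exact Or.inr (Or.inl (by ring))
    · exact Or.inr (Or.inr (Or.inl (by ring)))
    · exact Or.inr (Or.inr (Or.inr (by ring)))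
  · refine ⟨b, a, hab, ?_⟩
    rcases hp with rfl | rfl <;> rcases hq with rfl | rfl
    · exact Or.inl (by ring)
    · exact Or.inr (Or.inr (Or.inl (by ring)))
    · exact Or.inr (Or.inl (by ring))
    · exact Or.inr (Or.inr (Or.inr (by ring)))

lemma MS_mem_mE (k : ℕ) : mE k ∈ MS := ⟨k, Or.inl rfl⟩

lemma MS_mem_neg_mE (k : ℕ) : -mE k ∈ MS := ⟨k, Or.inr rfl⟩

lemma M2_mem {p q : ℤ} (hp : p ∈ MS) (hq : q ∈ MS) : p + q ∈ M2 := ⟨p, hp, q, hq, rfl⟩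

lemma L1 {x : ℤ} {N : ℕ} (hxMS : x ∉ MS) (hx : 2 * |x| < mE N) :
    (x + mE N ∉ M2) ∧ (x - mE N ∉ M2) := by
  have hxb : 2 * x < mE N ∧ -mE N < 2 * x := by
    rcases abs_cases x with ⟨h1, _⟩ | ⟨h1, _⟩ <;> constructor <;> linarith
  obtain ⟨hx1, hx2⟩ := hxb
  have hN := mE_pos N
  constructor <;> intro hv <;>
  · obtain ⟨a, b, hba, hc⟩ := M2_cases hv
    have hb := mE_pos b
    have ha := mE_pos a
    have hba' : mE b ≤ mE a := mE_le_mono hba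
    rcases lt_trichotomy a N with h | rfl | h
    · have h27 : 27 * mE a ≤ mE N := mE_mono27 h
      rcases hc with h1 | h1 | h1 | h1 <;> linarith
    · rcases hc with h1 | h1 | h1 | h1
      · first
        | exact hxMS ⟨b, Or.inl (by linarith)⟩
        | linarith
      · first
        | exact hxMS ⟨b, Or.inr (by linarith)⟩
        | linarith
      · first
        | exact hxMS ⟨b, Or.inl (by linarith)⟩
        | linarith
      · first
        | exact hxMS ⟨b, Or.inr (by linarith)⟩
        | linarith
    · have h27 : 27 * mE N ≤ mE a := mE_mono27 h
      rcases eq_or_lt_of_le hba with rfl | hba2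
      · rcases hc with h1 | h1 | h1 | h1 <;>
        first
          | linarith
          | (exact hxMS ⟨a, Or.inl (by linarith)⟩)
          | (exact hxMS ⟨a, Or.inr (by linarith)⟩)
      · have h27b : 27 * mE b ≤ mE a := mE_mono27 hba2
        rcases hc with h1 | h1 | h1 | h1 <;> linarith

lemma L2 {x : ℤ} {N : ℕ} (hx0 : x ≠ 0) (hx : 2 * |x| < mE N) :
    x - mE N + mE (N + 1) ∉ M2 := by
  have hxb : 2 * x < mE N ∧ -mE N < 2 * x := by
    rcases abs_cases x with ⟨h1, _⟩ | ⟨h1, _⟩ <;> constructor <;> linarith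
  obtain ⟨hx1, hx2⟩ := hxb
  have hN := mE_pos N
  have hN' := mE_pos (N + 1)
  have hNN : 27 * mE N ≤ mE (N + 1) := mE_mono27 (Nat.lt_succ_self N)
  intro hv
  obtain ⟨a, b, hba, hc⟩ := M2_cases hv
  have hb := mE_pos b
  have ha := mE_pos a
  have hba' : mE b ≤ mE a := mE_le_mono hba
  rcases lt_trichotomy a (N + 1) with h | rfl | h
  · have h27 : 27 * mE a ≤ mE (N + 1) := mE_mono27 h
    rcases hc with h1 | h1 | h1 | h1 <;> linarith
  · -- a = N+1 : then x - mE N = ± mE b (with sign from case)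
    rcases hc with h1 | h1 | h1 | h1
    · -- x - mE N = mE b : impossible, LHS < 0 < mE b
      linarith
    · -- x - mE N = -mE b : mE b = mE N - x ∈ (mE N/2, 3/2 mE N) so b = N, x = 0
      have hbnd1 : 2 * mE b < 3 * mE N := by linarith
      have hbnd2 : mE N < 2 * mE b := by linarith
      rcases lt_trichotomy b N with hb2 | rfl | hb2
      · have := mE_mono27 hb2; linarith
      · -- x = 0
        exact hx0 (by linarith)
      · have := mE_mono27 hb2; linarith
    · linarith
    · linarith
  · have h27 : 27 * mE (N + 1) ≤ mE a := mE_mono27 h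
    rcases eq_or_lt_of_le hba with rfl | hba2
    · rcases hc with h1 | h1 | h1 | h1 <;> linarith
    · have h27b : 27 * mE b ≤ mE a := mE_mono27 hba2
      rcases hc with h1 | h1 | h1 | h1 <;> linarith

lemma L3 {x : ℤ} {P : ℕ} (hx : 2 * |x| < mE P) :
    x + mE P + mE (P + 1) + mE (P + 2) ∉ M2 := by
  have hxb : 2 * x < mE P ∧ -mE P < 2 * x := by
    rcases abs_cases x with ⟨h1, _⟩ | ⟨h1, _⟩ <;> constructor <;> linarith
  obtain ⟨hx1, hx2⟩ := hxb
  have hP := mE_pos P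
  have hQ := mE_pos (P + 1)
  have hR := mE_pos (P + 2)
  have hPQ : 27 * mE P ≤ mE (P + 1) := mE_mono27 (Nat.lt_succ_self P)
  have hQR : 27 * mE (P + 1) ≤ mE (P + 2) := mE_mono27 (Nat.lt_succ_self _)
  intro hv
  obtain ⟨a, b, hba, hc⟩ := M2_cases hv
  have hb := mE_pos b
  have ha := mE_pos a
  have hba' : mE b ≤ mE a := mE_le_mono hba
  rcases lt_trichotomy a (P + 2) with h | rfl | h
  · have h27 : 27 * mE a ≤ mE (P + 2) := mE_mono27 h
    rcases hc with h1 | h1 | h1 | h1 <;> linarith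
  · rcases hc with h1 | h1 | h1 | h1
    · -- x + mE P + mE (P+1) = mE b with RHS in (mE(P+1)/2 , 3/2 mE(P+1)) : b = P+1, x + mE P = 0 ✗
      rcases lt_trichotomy b (P + 1) with hb2 | rfl | hb2
      · have := mE_mono27 hb2; linarith
      · linarith
      · have h1' : P + 2 ≤ b := hb2
        have := mE_le_mono h1'
        linarith
    · linarith
    · linarith
    · linarith
  · have h27 : 27 * mE (P + 2) ≤ mE a := mE_mono27 h
    rcases eq_or_lt_of_le hba with rfl | hba2
    · rcases hc with h1 | h1 | h1 | h1 <;> linarith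
    · have h27b : 27 * mE b ≤ mE a := mE_mono27 hba2
      rcases hc with h1 | h1 | h1 | h1 <;> linarith

lemma M2_neg {v : ℤ} (h : v ∈ M2) : -v ∈ M2 := by
  obtain ⟨p, ⟨a, hp⟩, q, ⟨b, hq⟩, rfl⟩ := h
  refine ⟨-p, ⟨a, ?_⟩, -q, ⟨b, ?_⟩, by ring⟩
  · rcases hp with rfl | rfl
    · exact Or.inr rfl
    · exact Or.inl (by ring)
  · rcases hq with rfl | rfl
    · exact Or.inr rfl
    · exact Or.inl (by ring)

lemma M2_dvd3 {v : ℤ} (h : v ∈ M2) : (3 : ℤ) ∣ v := by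
  obtain ⟨p, ⟨a, hp⟩, q, ⟨b, hq⟩, rfl⟩ := h
  have h3 : ∀ k : ℕ, (3:ℤ) ∣ mE k := by
    intro k
    unfold mE
    exact dvd_pow_self 3 (by positivity)
  rcases hp with rfl | rfl <;> rcases hq with rfl | rfl <;>
    [exact dvd_add (h3 a) (h3 b);
     exact dvd_add (h3 a) ((h3 b).neg_right);
     exact dvd_add ((h3 a).neg_right) (h3 b);
     exact dvd_add ((h3 a).neg_right) ((h3 b).neg_right)]

lemma notM2_of_mod3 {v : ℤ} (h : ¬ (3:ℤ) ∣ v) : v ∉ M2 := fun hv => h (M2_dvd3 hv)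

lemma one_E : (1 : ℤ) ∉ M2 := notM2_of_mod3 (by decide)

lemma two_E : (2 : ℤ) ∉ M2 := notM2_of_mod3 (by decide)

lemma negone_E : (-1 : ℤ) ∉ M2 := notM2_of_mod3 (by decide)

end Arith

section Ceq

/-- ratio -/
def rr (k : ℕ) : ℕ := 3 ^ (2 * k + 3)

lemma rr_mE (k : ℕ) : (rr k : ℤ) * mE k = mE (k + 1) := by
  unfold rr mE
  push_cast
  rw [← pow_add]
  congr 1
  ring

lemma rr_odd (k : ℕ) : rr k = 2 * (rr k / 2) + 1 := by
  have h : Odd (rr k) := Odd.pow ⟨1, rfl⟩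
  obtain ⟨m, hm⟩ := h
  omega

/-- the two extremal factorization value-multisets -/
def Yz (k : ℕ) : Multiset (ℤ × ℤ) := Multiset.replicate (rr k) (mE k, 1)

def Yz' (k : ℕ) : Multiset (ℤ × ℤ) :=
  (mE (k+1), 1) ::ₘ (Multiset.replicate (rr k / 2) (mE k, 1) +
    Multiset.replicate (rr k / 2) (-mE k, 1))

lemma good_Yz (k : ℕ) : Good (Yz k) := by
  intro q hq
  unfold Yz at hq
  rw [Multiset.eq_of_mem_replicate hq]
  exact Or.inl ⟨rfl, MS_mem_mE k⟩

lemma good_Yz' (k : ℕ) : Good (Yz' k) := by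
  intro q hq
  unfold Yz' at hq
  rw [Multiset.mem_cons] at hq
  rcases hq with rfl | hq
  · exact Or.inl ⟨rfl, MS_mem_mE (k+1)⟩
  · rcases Multiset.mem_add.1 hq with h | h
    · rw [Multiset.eq_of_mem_replicate h]
      exact Or.inl ⟨rfl, MS_mem_mE k⟩
    · rw [Multiset.eq_of_mem_replicate h]
      exact Or.inl ⟨rfl, MS_mem_neg_mE k⟩

lemma sum_replicate_pair (n : ℕ) (v : ℤ) (t : ℤ) :
    (Multiset.replicate n (v, t)).sum = ((n : ℤ) * v, (n : ℤ) * t) := by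
  rw [Multiset.sum_replicate, Prod.smul_mk, nsmul_eq_mul, nsmul_eq_mul]

lemma sum_Yz (k : ℕ) : (Yz k).sum = (mE (k+1), (rr k : ℤ)) := by
  unfold Yz
  rw [sum_replicate_pair, rr_mE, mul_one]

lemma sum_Yz' (k : ℕ) : (Yz' k).sum = (mE (k+1), (rr k : ℤ)) := by
  have hodd : ((rr k : ℕ) : ℤ) = 2 * ((rr k / 2 : ℕ) : ℤ) + 1 := by
    exact_mod_cast rr_odd k
  unfold Yz'
  rw [Multiset.sum_cons, Multiset.sum_add, sum_replicate_pair, sum_replicate_pair]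
  simp only [Prod.mk_add_mk, Prod.mk.injEq]
  constructor
  · ring
  · omega

lemma ak_mem : ∀ k : ℕ, ((mE (k+1), (rr k : ℤ)) : ℤ × ℤ) ∈ H := by
  intro k
  rw [← sum_Yz]
  exact sum_mem_H (good_Yz k)

noncomputable def ak (k : ℕ) : G := gg (mE (k+1), (rr k : ℤ)) (ak_mem k)

lemma zYz_mem (k : ℕ) : zOf (Yz k) ∈ Z (ak k) := by
  rw [zOf_mem_Z (good_Yz k), sum_Yz]
  rfl

lemma zYz'_mem (k : ℕ) : zOf (Yz' k) ∈ Z (ak k) := by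
  rw [zOf_mem_Z (good_Yz' k), sum_Yz']
  rfl

lemma card_Yz (k : ℕ) : Multiset.card (Yz k) = rr k := by
  rw [Yz, Multiset.card_replicate]

lemma card_Yz' (k : ℕ) : Multiset.card (Yz' k) = rr k := by
  have hodd := rr_odd k
  unfold Yz'
  rw [Multiset.card_cons, Multiset.card_add, Multiset.card_replicate,
    Multiset.card_replicate]
  omega

/-- the top-scale weight function -/
noncomputable def phi (k : ℕ) (p : ℤ × ℤ) : ℤ := if mE (k+1) ≤ |p.1| then p.1 else 0

noncomputable def Phi (k : ℕ) (z : Fac G) : ℤ := ((z.map avv).map (phi k)).sum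

lemma MS_abs {v : ℤ} (hv : v ∈ MS) : ∃ j, |v| = mE j := by
  obtain ⟨j, hj | hj⟩ := hv
  · exact ⟨j, by rw [hj, abs_of_pos (mE_pos j)]⟩
  · exact ⟨j, by rw [hj, abs_neg, abs_of_pos (mE_pos j)]⟩

lemma phi_dvd {k : ℕ} {v : ℤ} (hv : v ∈ MS) : mE (k+1) ∣ phi k (v, 1) := by
  unfold phi
  by_cases hle : mE (k+1) ≤ |(v,1).1|
  · rw [if_pos hle]
    obtain ⟨j, hj⟩ := MS_abs hv
    simp only at hle
    have hkj : k + 1 ≤ j := by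
      by_contra hc
      have h1 : mE j ≤ mE k := mE_le_mono (by omega)
      have h2 : 27 * mE k ≤ mE (k+1) := mE_mono27 (by omega)
      have h3 := mE_pos k
      omega
    have hdvd : mE (k+1) ∣ mE j := by
      unfold mE
      apply pow_dvd_pow
      nlinarith
    show mE (k+1) ∣ v
    rcases abs_choice v with h | h
    · rw [h] at hj; rw [hj]; exact hdvd
    · have hv2 : v = -mE j := by omega
      rw [hv2]; exact hdvd.neg_right
  · rw [if_neg hle]; exact dvd_zero _

lemma phi_close {k : ℕ} {v : ℤ} (hv : v ∈ MS) : |v - phi k (v, 1)| ≤ mE k := by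
  unfold phi
  by_cases hle : mE (k+1) ≤ |(v,1).1|
  · rw [if_pos hle]
    simp only [sub_self, abs_zero]
    exact le_of_lt (mE_pos k)
  · rw [if_neg hle]
    simp only at hle
    obtain ⟨j, hj⟩ := MS_abs hv
    have hjk : j ≤ k := by
      by_contra hc
      have h1 : mE (k+1) ≤ mE j := mE_le_mono (by omega)
      omega
    have h2 := mE_le_mono hjk
    rw [sub_zero]
    omega

end Ceq

section CeqMain

lemma phi_mEk (k : ℕ) : phi k (mE k, 1) = 0 := by
  unfold phi
  rw [if_neg]
  simp only [abs_of_pos (mE_pos k)]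
  have h27 : 27 * mE k ≤ mE (k+1) := mE_mono27 (by omega)
  have := mE_pos k
  omega

lemma phi_neg_mEk (k : ℕ) : phi k (-mE k, 1) = 0 := by
  unfold phi
  rw [if_neg]
  simp only [abs_neg, abs_of_pos (mE_pos k)]
  have h27 : 27 * mE k ≤ mE (k+1) := mE_mono27 (by omega)
  have := mE_pos k
  omega

lemma phi_mEk1 (k : ℕ) : phi k (mE (k+1), 1) = mE (k+1) := by
  unfold phi
  rw [if_pos]
  simp only [abs_of_pos (mE_pos (k+1))]
  exact le_refl _

lemma Phi_z (k : ℕ) : Phi k (zOf (Yz k)) = 0 := by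
  unfold Phi
  rw [vals_zOf (good_Yz k)]
  unfold Yz
  rw [Multiset.map_replicate, Multiset.sum_replicate, phi_mEk]
  simp

lemma Phi_z' (k : ℕ) : Phi k (zOf (Yz' k)) = mE (k+1) := by
  unfold Phi
  rw [vals_zOf (good_Yz' k)]
  unfold Yz'
  rw [Multiset.map_cons, Multiset.map_add, Multiset.map_replicate, Multiset.map_replicate,
    Multiset.sum_cons, Multiset.sum_add, Multiset.sum_replicate, Multiset.sum_replicate,
    phi_mEk, phi_neg_mEk, phi_mEk1]
  simp

lemma allc {a : G} {w : Fac G} (hw : w ∈ Z a) (hcard : (Multiset.card w : ℤ) = (av a).2) :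
    ∀ q ∈ w.map avv, q.2 = 1 ∧ q.1 ∈ MS := by
  classical
  set Y := w.map avv with hY
  have hG : Good Y := good_vals w
  have hcY : Multiset.card Y = cN Y + eN Y := by
    rw [hY, Multiset.card_map] at *
    exact (by rw [← Multiset.card_map avv w]; exact card_eq_cN_eN hG)
  have hsY : Y.sum.2 = (cN Y : ℤ) + 2 * (eN Y : ℤ) := sum_snd_eq hG
  have hsum : Y.sum = av a := mem_Z_iff.1 hw
  have hcw : Multiset.card Y = Multiset.card w := Multiset.card_map _ _
  have heN : eN Y = 0 := by
    rw [hsum] at hsY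
    omega
  intro q hq
  have hqAS := hG q hq
  rcases AS_snd hqAS with h1 | h2
  · exact ⟨h1, AS_c hqAS h1⟩
  · exfalso
    have : q ∈ Y.filter (fun p => p.2 = 2) := Multiset.mem_filter.2 ⟨hq, h2⟩
    have hfc : Multiset.card (Y.filter (fun p => p.2 = 2)) = 0 := heN
    rw [Multiset.card_eq_zero] at hfc
    rw [hfc] at this
    exact Multiset.notMem_zero q this

lemma Phi_dvd {k : ℕ} {w : Fac G} (hall : ∀ q ∈ w.map avv, q.2 = 1 ∧ q.1 ∈ MS) :
    mE (k+1) ∣ Phi k w := by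
  unfold Phi
  apply Multiset.dvd_sum
  intro x hx
  rw [Multiset.mem_map] at hx
  obtain ⟨q, hq, rfl⟩ := hx
  obtain ⟨h1, h2⟩ := hall q hq
  have : q = (q.1, 1) := Prod.ext rfl h1
  rw [this]
  exact phi_dvd h2

lemma fst_sum (X : Multiset (ℤ × ℤ)) : X.sum.1 = (X.map Prod.fst).sum := by
  induction X using Multiset.induction with
  | empty => simp
  | cons a s ih => simp [Multiset.sum_cons, ih]

lemma psi_bound {k : ℕ} (X : Multiset (ℤ × ℤ)) (hX : ∀ q ∈ X, q.2 = 1 ∧ q.1 ∈ MS) :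
    |(X.map Prod.fst).sum - (X.map (phi k)).sum| ≤ (Multiset.card X : ℤ) * mE k := by
  induction X using Multiset.induction with
  | empty => simp
  | cons a s ih =>
      obtain ⟨h1, h2⟩ := hX a (Multiset.mem_cons_self a s)
      have ihs := ih (fun q hq => hX q (Multiset.mem_cons_of_mem hq))
      have hc : |a.1 - phi k a| ≤ mE k := by
        have : a = (a.1, 1) := Prod.ext rfl h1
        rw [this]
        exact phi_close h2
      simp only [Multiset.map_cons, Multiset.sum_cons, Multiset.card_cons]
      push_cast
      have htri : |a.1 + (Multiset.map Prod.fst s).sum - (phi k a + (Multiset.map (phi k) s).sum)|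
          ≤ |a.1 - phi k a| + |(Multiset.map Prod.fst s).sum - (Multiset.map (phi k) s).sum| := by
        have : a.1 + (Multiset.map Prod.fst s).sum - (phi k a + (Multiset.map (phi k) s).sum)
            = (a.1 - phi k a) + ((Multiset.map Prod.fst s).sum - (Multiset.map (phi k) s).sum) := by
          ring
        rw [this]
        exact abs_add_le _ _
      have hpos := mE_pos k
      nlinarith [ihs, hc, htri]

open scoped Classical in
lemma Phi_step {k : ℕ} {a : G} {w w' : Fac G} (hw : w ∈ Z a) (hw' : w' ∈ Z a)
    (hall : ∀ q ∈ w.map avv, q.2 = 1 ∧ q.1 ∈ MS)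
    (hall' : ∀ q ∈ w'.map avv, q.2 = 1 ∧ q.1 ∈ MS) :
    |Phi k w - Phi k w'| ≤ 2 * (d w w' : ℤ) * mE k := by
  set Y := w.map avv with hYd
  set Y' := w'.map avv with hY'd
  have hG : Good Y := good_vals w
  have hG' : Good Y' := good_vals w'
  have hsum : Y.sum = Y'.sum := by
    rw [mem_Z_iff.1 hw, mem_Z_iff.1 hw']
  set D := Y - Y' with hDd
  set D' := Y' - Y with hD'd
  have hYD : D + Y ∩ Y' = Y := Multiset.sub_add_inter Y Y'
  have hYD' : D' + Y ∩ Y' = Y' := by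
    rw [Multiset.inter_comm]
    exact Multiset.sub_add_inter Y' Y
  -- the difference of Phi equals difference over D, D'
  have hPhiY : Phi k w = (D.map (phi k)).sum + ((Y ∩ Y').map (phi k)).sum := by
    have h := congrArg (fun X : Multiset (ℤ × ℤ) => (X.map (phi k)).sum) hYD
    simp only [Multiset.map_add, Multiset.sum_add] at h
    unfold Phi
    rw [← hYd]
    exact h.symm
  have hPhiY' : Phi k w' = (D'.map (phi k)).sum + ((Y ∩ Y').map (phi k)).sum := by
    have h := congrArg (fun X : Multiset (ℤ × ℤ) => (X.map (phi k)).sum) hYD'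
    simp only [Multiset.map_add, Multiset.sum_add] at h
    unfold Phi
    rw [← hY'd]
    exact h.symm
  -- fst sums over D and D' agree
  have hfst : (D.map Prod.fst).sum = (D'.map Prod.fst).sum := by
    have h1 : D.sum + (Y ∩ Y').sum = Y.sum := by rw [← Multiset.sum_add, hYD]
    have h2 : D'.sum + (Y ∩ Y').sum = Y'.sum := by rw [← Multiset.sum_add, hYD']
    have h3 : D.sum = D'.sum := by
      have := hsum
      have e1 := h1
      have e2 := h2
      rw [← e1, ← e2] at this
      exact add_right_cancel this
    rw [← fst_sum, ← fst_sum, h3]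
  have hallD : ∀ q ∈ D, q.2 = 1 ∧ q.1 ∈ MS :=
    fun q hq => hall q (Multiset.mem_of_le (Multiset.sub_le_self _ _) hq)
  have hallD' : ∀ q ∈ D', q.2 = 1 ∧ q.1 ∈ MS :=
    fun q hq => hall' q (Multiset.mem_of_le (Multiset.sub_le_self _ _) hq)
  have hb1 := psi_bound (k := k) D hallD
  have hb2 := psi_bound (k := k) D' hallD'
  -- card bounds
  have hd : d w w' = max (Multiset.card D) (Multiset.card D') := by
    rw [show w = zOf Y from (zOf_vals w).symm, show w' = zOf Y' from (zOf_vals w').symm]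
    exact d_zOf hG hG'
  have hc1 : (Multiset.card D : ℤ) ≤ (d w w' : ℤ) := by
    rw [hd]; exact_mod_cast le_max_left _ _
  have hc2 : (Multiset.card D' : ℤ) ≤ (d w w' : ℤ) := by
    rw [hd]; exact_mod_cast le_max_right _ _
  have hpos := mE_pos k
  have key : Phi k w - Phi k w' =
      ((D.map (phi k)).sum - (D.map Prod.fst).sum) -
      ((D'.map (phi k)).sum - (D'.map Prod.fst).sum) := by
    rw [hPhiY, hPhiY', hfst]
    ring
  rw [key]
  have h1 : |(D.map (phi k)).sum - (D.map Prod.fst).sum| ≤ (Multiset.card D : ℤ) * mE k := by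
    rw [abs_sub_comm]; exact hb1
  have h2 : |(D'.map (phi k)).sum - (D'.map Prod.fst).sum| ≤ (Multiset.card D' : ℤ) * mE k := by
    rw [abs_sub_comm]; exact hb2
  calc |_ - _| ≤ |(D.map (phi k)).sum - (D.map Prod.fst).sum| +
      |(D'.map (phi k)).sum - (D'.map Prod.fst).sum| := abs_sub _ _
  _ ≤ (Multiset.card D : ℤ) * mE k + (Multiset.card D' : ℤ) * mE k := add_le_add h1 h2
  _ ≤ 2 * (d w w' : ℤ) * mE k := by nlinarith

lemma chain_all {n : ℕ} {β : Type*} (c : Fin (n+1) → Fac G) (g : Fac G → β)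
    (hstep : ∀ i : Fin n, g (c i.castSucc) = g (c i.succ)) : ∀ j, g (c j) = g (c 0) := by
  intro j
  induction j using Fin.induction with
  | zero => rfl
  | succ i ih => rw [← hstep i]; exact ih

lemma chain_cross {n : ℕ} (c : Fin (n+1) → Fac G) (g : Fac G → ℤ)
    (hne : g (c 0) ≠ g (c (Fin.last n))) :
    ∃ i : Fin n, g (c i.castSucc) ≠ g (c i.succ) := by
  by_contra h
  push_neg at h
  exact hne (chain_all c g h (Fin.last n)).symm

lemma chain_squeeze {n : ℕ} (c : Fin (n+1) → Fac G) (r : ℕ)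
    (hstep : ∀ i : Fin n, Multiset.card (c i.castSucc) ≤ Multiset.card (c i.succ))
    (h0 : Multiset.card (c 0) = r) (hl : Multiset.card (c (Fin.last n)) = r) :
    ∀ j, Multiset.card (c j) = r := by
  have hup : ∀ j, r ≤ Multiset.card (c j) := by
    intro j
    induction j using Fin.induction with
    | zero => omega
    | succ i ih => exact le_trans ih (hstep i)
  have hdown : ∀ j, Multiset.card (c j) ≤ r := by
    intro j
    induction j using Fin.reverseInduction with
    | last => omega
    | cast i ih => exact le_trans (hstep i) ih
  intro j
  exact le_antisymm (hdown j) (hup j)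

end CeqMain

section CeqTop

lemma card_zYz (k : ℕ) : Multiset.card (zOf (Yz k)) = rr k := by
  rw [card_zOf, card_Yz]

lemma card_zYz' (k : ℕ) : Multiset.card (zOf (Yz' k)) = rr k := by
  rw [card_zOf, card_Yz']

lemma av_ak_snd (k : ℕ) : (av (ak k)).2 = (rr k : ℤ) := rfl

lemma step_big {k : ℕ} {w w' : Fac G} (hw : w ∈ Z (ak k)) (hw' : w' ∈ Z (ak k))
    (hcw : Multiset.card w = rr k) (hcw' : Multiset.card w' = rr k)
    (hne : Phi k w ≠ Phi k w') : 3 ^ (2*k+2) ≤ d w w' := by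
  have hall : ∀ q ∈ w.map avv, q.2 = 1 ∧ q.1 ∈ MS :=
    allc hw (by rw [hcw, av_ak_snd])
  have hall' : ∀ q ∈ w'.map avv, q.2 = 1 ∧ q.1 ∈ MS :=
    allc hw' (by rw [hcw', av_ak_snd])
  have hdvd : mE (k+1) ∣ (Phi k w - Phi k w') :=
    dvd_sub (Phi_dvd hall) (Phi_dvd hall')
  have habs : mE (k+1) ≤ |Phi k w - Phi k w'| :=
    Int.le_of_dvd (abs_pos.2 (sub_ne_zero.2 hne)) ((dvd_abs _ _).2 hdvd)
  have hstepb := Phi_step (k := k) hw hw' hall hall'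
  have hrr : (rr k : ℤ) * mE k = mE (k+1) := rr_mE k
  have hpos := mE_pos k
  have h2d : (rr k : ℤ) ≤ 2 * (d w w' : ℤ) := by
    nlinarith [le_trans habs hstepb]
  have h3 : ((3:ℤ)) ^ (2*k+3) = (rr k : ℤ) := by unfold rr; push_cast; ring
  have hd : ((3:ℤ)) ^ (2*k+2) ≤ (d w w' : ℤ) := by
    have he : ((3:ℤ)) ^ (2*k+3) = 3 * 3 ^ (2*k+2) := by ring
    have hp : (0:ℤ) < 3 ^ (2*k+2) := by positivity
    nlinarith [h2d, h3, he]
  exact_mod_cast hd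

lemma ceq_ak_lb (k : ℕ) : ((3 ^ (2*k+2) : ℕ) : ℕ∞) ≤ ceq (ak k) := by
  refine le_sInf ?_
  intro N hN
  obtain ⟨n, c, h0, hl, hmem, hstep⟩ := hN (zOf (Yz k)) (zYz_mem k) (zOf (Yz' k)) (zYz'_mem k)
    (by rw [card_zYz, card_zYz'])
  have hcards : ∀ j, Multiset.card (c j) = rr k := by
    intro j
    have := chain_all c Multiset.card (fun i => (hstep i).2) j
    rw [this, h0, card_zYz]
  have hne : Phi k (c 0) ≠ Phi k (c (Fin.last n)) := by
    rw [h0, hl, Phi_z, Phi_z']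
    exact fun h => absurd h.symm (ne_of_gt (mE_pos (k+1)))
  obtain ⟨i, hi⟩ := chain_cross c (Phi k) hne
  have hbig := step_big (hmem i.castSucc) (hmem i.succ) (hcards _) (hcards _) hi
  calc ((3 ^ (2*k+2) : ℕ) : ℕ∞) ≤ ((d (c i.castSucc) (c i.succ) : ℕ) : ℕ∞) := by
        exact_mod_cast hbig
  _ ≤ N := (hstep i).1

lemma cmon_ak_lb (k : ℕ) : ((3 ^ (2*k+2) : ℕ) : ℕ∞) ≤ cmon (ak k) := by
  refine le_sInf ?_
  intro N hN
  obtain ⟨n, c, h0, hl, hmem, hstep⟩ := hN (zOf (Yz k)) (zYz_mem k) (zOf (Yz' k)) (zYz'_mem k)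
    (by rw [card_zYz, card_zYz'])
  have hcards : ∀ j, Multiset.card (c j) = rr k := by
    apply chain_squeeze c (rr k) (fun i => (hstep i).2)
    · rw [h0, card_zYz]
    · rw [hl, card_zYz']
  have hne : Phi k (c 0) ≠ Phi k (c (Fin.last n)) := by
    rw [h0, hl, Phi_z, Phi_z']
    exact fun h => absurd h.symm (ne_of_gt (mE_pos (k+1)))
  obtain ⟨i, hi⟩ := chain_cross c (Phi k) hne
  have hbig := step_big (hmem i.castSucc) (hmem i.succ) (hcards _) (hcards _) hi
  calc ((3 ^ (2*k+2) : ℕ) : ℕ∞) ≤ ((d (c i.castSucc) (c i.succ) : ℕ) : ℕ∞) := by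
        exact_mod_cast hbig
  _ ≤ N := (hstep i).1

lemma nat_lt_pow (n : ℕ) : n < 3 ^ (2*n+2) := by
  calc n < 2*n+2 := by omega
  _ < 3 ^ (2*n+2) := Nat.lt_pow_self (by norm_num)

lemma ceqH_top : ceqH G = ⊤ := by
  rw [ceqH, iSup_eq_top]
  intro b hb
  lift b to ℕ using hb.ne
  refine ⟨ak b, lt_of_lt_of_le ?_ (ceq_ak_lb b)⟩
  exact_mod_cast nat_lt_pow b

lemma cmonH_top : cmonH G = ⊤ := by
  rw [cmonH, iSup_eq_top]
  intro b hb
  lift b to ℕ using hb.ne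
  refine ⟨ak b, lt_of_lt_of_le ?_ (cmon_ak_lb b)⟩
  exact_mod_cast nat_lt_pow b

end CeqTop

section Adj

lemma good_replicate {c : ℤ × ℤ} (hc : c ∈ AS) (n : ℕ) : Good (Multiset.replicate n c) := by
  intro q hq
  rw [Multiset.eq_of_mem_replicate hq]
  exact hc

lemma good_cons {c : ℤ × ℤ} {T : Multiset (ℤ × ℤ)} (hc : c ∈ AS) (hT : Good T) :
    Good (c ::ₘ T) := by
  intro q hq
  rcases Multiset.mem_cons.1 hq with rfl | hq
  exacts [hc, hT q hq]

lemma one2_AS : ((1:ℤ), (2:ℤ)) ∈ AS := Or.inr ⟨rfl, one_E⟩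

lemma counts {a : G} {z : Fac G} (hz : z ∈ Z a) :
    (cN (z.map avv) : ℤ) + (eN (z.map avv) : ℤ) = (Multiset.card z : ℤ) ∧
    (cN (z.map avv) : ℤ) + 2 * (eN (z.map avv) : ℤ) = (av a).2 := by
  have hG : Good (z.map avv) := good_vals z
  constructor
  · have h1 := card_eq_cN_eN hG
    rw [Multiset.card_map] at h1
    exact_mod_cast h1.symm
  · rw [← sum_snd_eq hG, mem_Z_iff.1 hz]

lemma feasA {a : G} (f cc : ℕ) (hf : 2 ≤ f) (ht : (av a).2 = 2*(f:ℤ) + (cc:ℤ)) :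
    ∃ z ∈ Z a, Multiset.card z = f + cc := by
  set s := (av a).1 with hs
  set T : ℤ := s - ((f:ℤ) - 2) - 3*(cc:ℤ) with hT
  set lv : ℤ := if (3:ℤ) ∣ (T - 1) then 2 else 1 with hlv
  have hlv3 : ¬ (3:ℤ) ∣ lv ∧ ¬ (3:ℤ) ∣ (T - lv) := by
    rw [hlv]
    split <;> rename_i hsp <;> constructor <;> omega
  set Y : Multiset (ℤ × ℤ) := (lv, 2) ::ₘ (T - lv, 2) ::ₘ
    (Multiset.replicate (f-2) ((1:ℤ), (2:ℤ)) + Multiset.replicate cc ((3:ℤ), (1:ℤ))) with hY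
  have hG : Good Y := by
    apply good_cons (Or.inr ⟨rfl, notM2_of_mod3 hlv3.1⟩)
    apply good_cons (Or.inr ⟨rfl, notM2_of_mod3 hlv3.2⟩)
    intro q hq
    rcases Multiset.mem_add.1 hq with h | h
    · rw [Multiset.eq_of_mem_replicate h]; exact one2_AS
    · rw [Multiset.eq_of_mem_replicate h]; exact m3_AS
  refine ⟨zOf Y, ?_, ?_⟩
  · rw [zOf_mem_Z hG, hY]
    rw [Multiset.sum_cons, Multiset.sum_cons, Multiset.sum_add,
      sum_replicate_pair, sum_replicate_pair]
    have hc2 : ((f - 2 : ℕ) : ℤ) = (f:ℤ) - 2 := by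
      push_cast [hf]
      ring
    apply Prod.ext
    · simp only [Prod.mk_add_mk, Prod.fst_add]
      rw [hc2, hT]
      push_cast
      ring
    · simp only [Prod.mk_add_mk, Prod.snd_add]
      rw [hc2, ht]
      push_cast
      ring
  · rw [card_zOf, hY]
    rw [Multiset.card_cons, Multiset.card_cons, Multiset.card_add,
      Multiset.card_replicate, Multiset.card_replicate]
    omega

lemma feasB {a : G} (cc : ℕ) (hcc : 3 ≤ cc) (ht : (av a).2 = 2 + (cc:ℤ)) :
    ∃ z ∈ Z a, Multiset.card z = 1 + cc := by
  set s := (av a).1 with hs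
  set x : ℤ := s - 3*((cc:ℤ) - 3) with hx
  obtain ⟨P, hP⟩ := exists_big (2 * |x|)
  set J : ℤ := x + mE P + mE (P+1) + mE (P+2) with hJ
  have hJM : J ∉ M2 := L3 hP
  set Y : Multiset (ℤ × ℤ) := (J, 2) ::ₘ (-mE P, 1) ::ₘ (-mE (P+1), 1) ::ₘ (-mE (P+2), 1) ::ₘ
    Multiset.replicate (cc-3) ((3:ℤ), (1:ℤ)) with hY
  have hG : Good Y := by
    apply good_cons (Or.inr ⟨rfl, hJM⟩)
    apply good_cons (Or.inl ⟨rfl, MS_mem_neg_mE P⟩)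
    apply good_cons (Or.inl ⟨rfl, MS_mem_neg_mE (P+1)⟩)
    apply good_cons (Or.inl ⟨rfl, MS_mem_neg_mE (P+2)⟩)
    exact good_replicate m3_AS _
  refine ⟨zOf Y, ?_, ?_⟩
  · rw [zOf_mem_Z hG, hY]
    rw [Multiset.sum_cons, Multiset.sum_cons, Multiset.sum_cons, Multiset.sum_cons,
      sum_replicate_pair]
    have hc2 : ((cc - 3 : ℕ) : ℤ) = (cc:ℤ) - 3 := by
      push_cast [hcc]
      ring
    apply Prod.ext
    · simp only [Prod.mk_add_mk, Prod.fst_add]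
      rw [hc2, hJ, hx]
      push_cast
      ring
    · simp only [Prod.mk_add_mk, Prod.snd_add]
      rw [hc2, ht]
      push_cast
      ring
  · rw [card_zOf, hY]
    simp only [Multiset.card_cons, Multiset.card_replicate]
    omega

end Adj

section Bridge

lemma MS_ne {v : ℤ} (hv : v ∈ MS) : v ≠ 0 := by
  obtain ⟨j, hj | hj⟩ := hv <;> have := mE_pos j <;> omega

lemma nz4 {v1 v2 v3 v4 v5 : ℤ} (h1 : v1 ∈ MS) (h2 : v2 ∈ MS) (h3 : v3 ∈ MS)
    (h4 : v4 ∈ MS) (h5 : v5 ∈ MS) (T : Multiset (ℤ × ℤ)) :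
    ∃ w1 w2 w3 w4 u : ℤ,
      ((v1,(1:ℤ)) ::ₘ (v2,1) ::ₘ (v3,1) ::ₘ (v4,1) ::ₘ (v5,1) ::ₘ T)
        = ((w1,(1:ℤ)) ::ₘ (w2,1) ::ₘ (w3,1) ::ₘ (w4,1) ::ₘ (u,1) ::ₘ T)
      ∧ w1 + w2 + w3 + w4 ≠ 0 := by
  by_cases c1 : v1 + v2 + v3 + v4 ≠ 0
  · exact ⟨v1, v2, v3, v4, v5, rfl, c1⟩
  by_cases c2 : v1 + v2 + v3 + v5 ≠ 0
  · refine ⟨v1, v2, v3, v5, v4, ?_, c2⟩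
    rw [Multiset.cons_swap ((v4,(1:ℤ))) ((v5,(1:ℤ)))]
  by_cases c3 : v1 + v2 + v4 + v5 ≠ 0
  · refine ⟨v1, v2, v4, v5, v3, ?_, c3⟩
    rw [Multiset.cons_swap ((v3,(1:ℤ))) ((v4,(1:ℤ))), Multiset.cons_swap ((v3,(1:ℤ))) ((v5,(1:ℤ)))]
  by_cases c4 : v1 + v3 + v4 + v5 ≠ 0
  · refine ⟨v1, v3, v4, v5, v2, ?_, c4⟩
    rw [Multiset.cons_swap ((v2,(1:ℤ))) ((v3,(1:ℤ))), Multiset.cons_swap ((v2,(1:ℤ))) ((v4,(1:ℤ))),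
      Multiset.cons_swap ((v2,(1:ℤ))) ((v5,(1:ℤ)))]
  · push_neg at c1 c2 c3 c4
    have hv5 := MS_ne h5
    refine ⟨v2, v3, v4, v5, v1, ?_, by omega⟩
    rw [Multiset.cons_swap ((v1,(1:ℤ))) ((v2,(1:ℤ))), Multiset.cons_swap ((v1,(1:ℤ))) ((v3,(1:ℤ))),
      Multiset.cons_swap ((v1,(1:ℤ))) ((v4,(1:ℤ))), Multiset.cons_swap ((v1,(1:ℤ))) ((v5,(1:ℤ)))]

lemma mem_Zk {a : G} {n : ℕ} {z : Fac G} (hz : z ∈ Z a) (hc : Multiset.card z = n) :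
    z ∈ Zk a n := ⟨hz, hc⟩

lemma bridge {a : G} {k l : ℕ} (hadj : Adjacent a k l) :
    ∃ x ∈ Zk a k, ∃ y ∈ Zk a l, d x y ≤ 6 := by
  classical
  obtain ⟨hk, hl, hkl, hmid⟩ := hadj
  obtain ⟨zk, hzk, hck⟩ := hk
  obtain ⟨zl, hzl, hcl⟩ := hl
  by_cases hl6 : l ≤ 6
  · refine ⟨zk, mem_Zk hzk hck, zl, mem_Zk hzl hcl, ?_⟩
    refine le_trans (d_le_max_card _ _) ?_
    omega
  push_neg at hl6
  obtain ⟨hck1, hck2⟩ := counts hzk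
  obtain ⟨hcl1, hcl2⟩ := counts hzl
  set s : ℤ := (av a).1 with hs
  set t : ℤ := (av a).2 with ht
  set el := eN (zl.map avv) with hel
  set cl := cN (zl.map avv) with hcldef
  set ek := eN (zk.map avv) with hek
  set ck := cN (zk.map avv) with hckdef
  rw [hck] at hck1
  rw [hcl] at hcl1
  -- k = l - 1
  have hkeq : k = l - 1 := by
    by_contra hne
    have hklt : k < l - 1 := by omega
    -- construct a factorization of length l - 1
    have hmidf : ∃ z ∈ Z a, Multiset.card z = l - 1 := by
      by_cases hel0 : 1 ≤ el
      · -- feasA with f = el + 1, cc = cl - 2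
      
        have hcl2' : 2 ≤ cl := by omega
        obtain ⟨z, hz, hcz⟩ := feasA (a := a) (el + 1) (cl - 2) (by omega)
          (by push_cast [hcl2']; rw [← ht]; omega)
        exact ⟨z, hz, by rw [hcz]; omega⟩
      · -- el = 0 : feasB with cc = cl - 2 = l - 2
        have hel00 : el = 0 := by omega
        have hcl2' : 2 ≤ cl := by omega
        obtain ⟨z, hz, hcz⟩ := feasB (a := a) (cl - 2) (by omega)
          (by push_cast [hcl2']; rw [← ht]; omega)
        exact ⟨z, hz, by rw [hcz]; omega⟩
    obtain ⟨z, hz, hcz⟩ := hmidf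
    have := hmid (l-1) ⟨z, hz, hcz⟩ (by omega) (by omega)
    omega
  subst hkeq
  -- main case split
  by_cases hel0 : el = 0
  · -- BR0 : use zl, all-c
    have hall : ∀ q ∈ zl.map avv, q.2 = 1 ∧ q.1 ∈ MS := by
      apply allc hzl
      rw [hcl, ← ht]
      omega
    set Y := zl.map avv with hY
    have hG : Good Y := good_vals zl
    have hc5 : 5 ≤ cN Y := by omega
    obtain ⟨v1, T1, hY1, hm1, hG1, hcc1, hee1⟩ := ex_c hG (by omega)
    obtain ⟨v2, T2, hY2, hm2, hG2, hcc2, hee2⟩ := ex_c hG1 (by omega)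
    obtain ⟨v3, T3, hY3, hm3, hG3, hcc3, hee3⟩ := ex_c hG2 (by omega)
    obtain ⟨v4, T4, hY4, hm4, hG4, hcc4, hee4⟩ := ex_c hG3 (by omega)
    obtain ⟨v5, T5, hY5, hm5, hG5, hcc5, hee5⟩ := ex_c hG4 (by omega)
    have hYfull : Y = (v1,(1:ℤ)) ::ₘ (v2,1) ::ₘ (v3,1) ::ₘ (v4,1) ::ₘ (v5,1) ::ₘ T5 := by
      rw [hY1, hY2, hY3, hY4, hY5]
    obtain ⟨w1, w2, w3, w4, u, heq, hσ⟩ := nz4 hm1 hm2 hm3 hm4 hm5 T5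
    set σ := w1 + w2 + w3 + w4 with hσdef
    obtain ⟨N, hN⟩ := exists_big (2 * |σ|)
    set i : ℤ := σ - mE N + mE (N+1) with hidef
    have hiM : i ∉ M2 := L2 hσ hN
    set Tl : Multiset (ℤ × ℤ) := (u,(1:ℤ)) ::ₘ T5 with hTl
    set R : Multiset (ℤ × ℤ) := (w1,(1:ℤ)) ::ₘ (w2,1) ::ₘ (w3,1) ::ₘ {(w4,1)} with hR
    set A : Multiset (ℤ × ℤ) := (i,(2:ℤ)) ::ₘ (mE N, 1) ::ₘ {(-mE (N+1), 1)} with hA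
    have hYRT : Y = R + Tl := by
      rw [hYfull, heq, hR, hTl]
      simp only [Multiset.cons_add, Multiset.singleton_add]
    have hGRT : Good (R + Tl) := by rw [← hYRT]; exact hG
    have hGA : Good (A + Tl) := by
      apply good_add _ (good_add_right hGRT)
      apply good_cons (Or.inr ⟨rfl, hiM⟩)
      apply good_cons (Or.inl ⟨rfl, MS_mem_mE N⟩)
      intro q hq
      rw [Multiset.mem_singleton] at hq
      rw [hq]
      exact Or.inl ⟨rfl, MS_mem_neg_mE (N+1)⟩
    have hsumRA : A.sum = R.sum := by
      rw [hA, hR]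
      simp only [Multiset.sum_cons, Multiset.sum_singleton, Prod.mk_add_mk]
      apply Prod.ext
      · simp only
        rw [hidef]
        ring
      · simp
    have hzlY : zl = zOf Y := (zOf_vals zl).symm
    have hmemA : zOf (A + Tl) ∈ Z a := by
      apply zOf_mem_Z_surgery hGA hsumRA _ hGRT
      rw [← hYRT, ← hzlY]
      exact hzl
    have hcardA : Multiset.card (zOf (A + Tl)) = l - 1 := by
      rw [card_zOf, Multiset.card_add, hA, hTl]
      have : Multiset.card Y = l := by rw [hY, Multiset.card_map, hcl]
      rw [hYRT, hR, hTl] at this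
      simp only [Multiset.card_cons, Multiset.card_add, Multiset.card_singleton] at this ⊢
      omega
    refine ⟨zOf (A + Tl), mem_Zk hmemA hcardA, zl, mem_Zk hzl hcl, ?_⟩
    have hd : d zl (zOf (A + Tl)) ≤ 4 := by
      rw [hzlY, hYRT]
      refine le_trans (d_surgery hGRT hGA) ?_
      rw [hR, hA]
      simp
    calc d (zOf (A + Tl)) zl = d zl (zOf (A + Tl)) := by
          rw [d_def _ _ inferInstance, d_def _ _ inferInstance]
          exact max_comm _ _
    _ ≤ 6 := by omega
  · -- el ≥ 1
    have hel1 : 1 ≤ el := by omega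
    have hclk : 2 ≤ cl := by omega
    by_cases hcl3 : 3 ≤ cl
    · -- BR1
      set x0 : ℤ := s - ((el:ℤ) - 1) - 3*((cl:ℤ) - 3) with hx0
      obtain ⟨P, hP⟩ := exists_big (2 * |x0|)
      set J : ℤ := x0 + mE P + mE (P+1) + mE (P+2) with hJ
      have hJM : J ∉ M2 := L3 hP
      set i : ℤ := -(mE P + mE (P+1) + mE (P+2) + mE (P+3)) with hidef
      have hiM : i ∉ M2 := by
        intro hmem
        have h2 : -i ∈ M2 := M2_neg hmem
        have hform : -i = mE P + mE (P+1) + mE (P+2) + mE (P+3) := by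
          rw [hidef]; ring
        have h27 : 27 * mE P ≤ mE (P+1) := mE_mono27 (by omega)
        have hPbound : 2 * |mE P| < mE (P+1) := by
          rw [abs_of_pos (mE_pos P)]
          have := mE_pos P
          omega
        have h3 := L3 (x := mE P) (P := P+1) hPbound
        rw [hform] at h2
        exact h3 h2
      set Q : Multiset (ℤ × ℤ) := (J,(2:ℤ)) ::ₘ
        (Multiset.replicate (el-1) ((1:ℤ),(2:ℤ)) + Multiset.replicate (cl-3) ((3:ℤ),(1:ℤ))) with hQ
      set R : Multiset (ℤ × ℤ) := (-mE P,(1:ℤ)) ::ₘ (-mE (P+1),1) ::ₘ {(-mE (P+2),1)} with hR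
      set A : Multiset (ℤ × ℤ) := (i,(2:ℤ)) ::ₘ {(mE (P+3),(1:ℤ))} with hA
      have hGQ : Good Q := by
        apply good_cons (Or.inr ⟨rfl, hJM⟩)
        intro q hq
        rcases Multiset.mem_add.1 hq with h | h
        · rw [Multiset.eq_of_mem_replicate h]; exact one2_AS
        · rw [Multiset.eq_of_mem_replicate h]; exact m3_AS
      have hGR : Good (R + Q) := by
        apply good_add _ hGQ
        apply good_cons (Or.inl ⟨rfl, MS_mem_neg_mE P⟩)
        apply good_cons (Or.inl ⟨rfl, MS_mem_neg_mE (P+1)⟩)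
        intro q hq
        rw [Multiset.mem_singleton] at hq
        rw [hq]; exact Or.inl ⟨rfl, MS_mem_neg_mE (P+2)⟩
      have hGA : Good (A + Q) := by
        apply good_add _ hGQ
        apply good_cons (Or.inr ⟨rfl, hiM⟩)
        intro q hq
        rw [Multiset.mem_singleton] at hq
        rw [hq]; exact Or.inl ⟨rfl, MS_mem_mE (P+3)⟩
      have hsumRA : A.sum = R.sum := by
        rw [hA, hR]
        simp only [Multiset.sum_cons, Multiset.sum_singleton, Prod.mk_add_mk]
        apply Prod.ext
        · simp only
          rw [hidef]; ring
        · simp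
      have hcel : ((el - 1 : ℕ) : ℤ) = (el:ℤ) - 1 := by push_cast [hel1]; ring
      have hccl : ((cl - 3 : ℕ) : ℤ) = (cl:ℤ) - 3 := by push_cast [hcl3]; ring
      have hsumRQ : (R + Q).sum = av a := by
        rw [Multiset.sum_add, hR, hQ]
        rw [Multiset.sum_cons, Multiset.sum_cons, Multiset.sum_singleton,
          Multiset.sum_cons, Multiset.sum_add, sum_replicate_pair, sum_replicate_pair]
        apply Prod.ext
        · simp only [Prod.mk_add_mk, Prod.fst_add]
          rw [hcel, hccl, hJ, hx0]
          push_cast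
          ring
        · simp only [Prod.mk_add_mk, Prod.snd_add]
          rw [hcel, hccl, ← ht]
          push_cast
          omega
      have hmemR : zOf (R + Q) ∈ Z a := (zOf_mem_Z hGR).2 hsumRQ
      have hmemA : zOf (A + Q) ∈ Z a := zOf_mem_Z_surgery hGA hsumRA hmemR hGR
      have hcards : Multiset.card (zOf (R + Q)) = l ∧ Multiset.card (zOf (A + Q)) = l - 1 := by
        constructor <;>
        · rw [card_zOf, Multiset.card_add, hQ]
          first
            | rw [hR]
            | rw [hA]
          simp only [Multiset.card_cons, Multiset.card_singleton, Multiset.card_add,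
            Multiset.card_replicate]
          omega
      refine ⟨zOf (A + Q), mem_Zk hmemA hcards.2, zOf (R + Q), mem_Zk hmemR hcards.1, ?_⟩
      have hd : d (zOf (R + Q)) (zOf (A + Q)) ≤ 3 := by
        refine le_trans (d_surgery hGR hGA) ?_
        rw [hR, hA]
        simp
      calc d (zOf (A + Q)) (zOf (R + Q)) = d (zOf (R + Q)) (zOf (A + Q)) := by
            rw [d_def _ _ inferInstance, d_def _ _ inferInstance]
            exact max_comm _ _
      _ ≤ 6 := by omega
    · -- BR2 : cl = 2
      have hcl2'' : cl = 2 := by omega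
      have hel5 : 5 ≤ el := by omega
      set iv : ℤ := if (3:ℤ) ∣ (s - ((el:ℤ) - 2) - 1) then 2 else 1 with hiv
      have hivJ : ¬ (3:ℤ) ∣ iv ∧ ¬ (3:ℤ) ∣ (s - ((el:ℤ)-2) - iv) := by
        rw [hiv]
        split <;> rename_i hsp <;> constructor <;> omega
      set J : ℤ := s - ((el:ℤ)-2) - iv with hJ
      set lv : ℤ := 3 - iv with hlv
      set lv' : ℤ := 2*iv - 3 with hlv'
      obtain ⟨hiv1, hiv2⟩ := hivJ
      have hlvM : lv ∉ M2 ∧ lv' ∉ M2 := by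
        constructor
        · apply notM2_of_mod3; omega
        · apply notM2_of_mod3; omega
      have hJM : J ∉ M2 := notM2_of_mod3 hiv2
      have hivM : iv ∉ M2 := notM2_of_mod3 hiv1
      set Q : Multiset (ℤ × ℤ) := (J,(2:ℤ)) ::ₘ Multiset.replicate (el-2) ((1:ℤ),(2:ℤ)) with hQ
      set R : Multiset (ℤ × ℤ) := (iv,(2:ℤ)) ::ₘ ((3:ℤ),(1:ℤ)) ::ₘ {((-3:ℤ),(1:ℤ))} with hR
      set A : Multiset (ℤ × ℤ) := (lv,(2:ℤ)) ::ₘ {(lv',(2:ℤ))} with hA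
      have neg3_MS : (-3:ℤ) ∈ MS := ⟨0, Or.inr (by norm_num [mE])⟩
      have hGQ : Good Q := by
        apply good_cons (Or.inr ⟨rfl, hJM⟩)
        exact good_replicate one2_AS _
      have hGR : Good (R + Q) := by
        apply good_add _ hGQ
        apply good_cons (Or.inr ⟨rfl, hivM⟩)
        apply good_cons m3_AS
        intro q hq
        rw [Multiset.mem_singleton] at hq
        rw [hq]; exact Or.inl ⟨rfl, neg3_MS⟩
      have hGA : Good (A + Q) := by
        apply good_add _ hGQ
        apply good_cons (Or.inr ⟨rfl, hlvM.1⟩)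
        intro q hq
        rw [Multiset.mem_singleton] at hq
        rw [hq]; exact Or.inr ⟨rfl, hlvM.2⟩
      have hsumRA : A.sum = R.sum := by
        rw [hA, hR]
        simp only [Multiset.sum_cons, Multiset.sum_singleton, Prod.mk_add_mk]
        apply Prod.ext
        · simp only
          rw [hlv, hlv']; ring
        · simp
      have hcel : ((el - 2 : ℕ) : ℤ) = (el:ℤ) - 2 := by push_cast [(by omega : 2 ≤ el)]; ring
      have hsumRQ : (R + Q).sum = av a := by
        rw [Multiset.sum_add, hR, hQ]
        rw [Multiset.sum_cons, Multiset.sum_cons, Multiset.sum_singleton,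
          Multiset.sum_cons, sum_replicate_pair]
        apply Prod.ext
        · simp only [Prod.mk_add_mk, Prod.fst_add]
          rw [hcel, hJ]
          push_cast
          ring
        · simp only [Prod.mk_add_mk, Prod.snd_add]
          rw [hcel, ← ht]
          push_cast
          omega
      have hmemR : zOf (R + Q) ∈ Z a := (zOf_mem_Z hGR).2 hsumRQ
      have hmemA : zOf (A + Q) ∈ Z a := zOf_mem_Z_surgery hGA hsumRA hmemR hGR
      have hcardsR : Multiset.card (zOf (R + Q)) = l := by
        rw [card_zOf, Multiset.card_add, hQ, hR]
        simp only [Multiset.card_cons, Multiset.card_singleton, Multiset.card_replicate]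
        omega
      have hcardsA : Multiset.card (zOf (A + Q)) = l - 1 := by
        rw [card_zOf, Multiset.card_add, hQ, hA]
        simp only [Multiset.card_cons, Multiset.card_singleton, Multiset.card_replicate]
        omega
      refine ⟨zOf (A + Q), mem_Zk hmemA hcardsA, zOf (R + Q), mem_Zk hmemR hcardsR, ?_⟩
      have hd : d (zOf (R + Q)) (zOf (A + Q)) ≤ 3 := by
        refine le_trans (d_surgery hGR hGA) ?_
        rw [hR, hA]
        simp
      calc d (zOf (A + Q)) (zOf (R + Q)) = d (zOf (R + Q)) (zOf (A + Q)) := by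
            rw [d_def _ _ inferInstance, d_def _ _ inferInstance]
            exact max_comm _ _
      _ ≤ 6 := by omega

end Bridge

lemma cadj_le (a : G) : cadj a ≤ 6 := by
  refine sSup_le ?_
  rintro r ⟨k, l, hadj, rfl⟩
  obtain ⟨x, hx, y, hy, hd⟩ := bridge hadj
  have h1 : dS (Zk a k) (Zk a l) ≤ d x y := Nat.sInf_le ⟨x, hx, y, hy, rfl⟩
  have h2 : dS (Zk a k) (Zk a l) ≤ 6 := le_trans h1 hd
  exact_mod_cast Nat.cast_le.2 h2

lemma cadjH_le : cadjH G ≤ 6 := iSup_le cadj_le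

end W


/-- There exists a reduced, commutative, cancellative, atomic monoid `H` that is tame
(`t(H) < ∞`) but satisfies `c_eq(H) = ∞` (hence `c_mon(H) = ∞`), while
`c_adj(H) < ∞` (indeed `c_adj(H) ≤ 6`). -/
theorem stmt14 :
    ∃ (α : Type) (inst : CancelCommMonoid α),
      @Reduced α inst ∧ @Atomic α inst ∧
      @tH α inst < ⊤ ∧ @ceqH α inst = ⊤ ∧ @cmonH α inst = ⊤ ∧
      @cadjH α inst < ⊤ ∧ @cadjH α inst ≤ (6 : ℕ∞) := by
  refine ⟨W.G, inferInstance, W.reduced_G, W.atomic_G, ?_, W.ceqH_top, W.cmonH_top, ?_, W.cadjH_le⟩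
  · refine lt_of_le_of_lt W.tH_le ?_
    exact lt_top_iff_ne_top.2 (by decide)
  · refine lt_of_le_of_lt W.cadjH_le ?_
    exact lt_top_iff_ne_top.2 (by decide)


end CMR
end

section
/- Let H be a reduced, commutative, cancellative, atomic monoid and let a ∈ H satisfy |L(a)| ≤ 2. Then μ_adj(a) ≤ t(H). -/
namespace CMR

variable {α : Type*} [CancelCommMonoid α]

/-- Let `H` be a reduced, commutative, cancellative, atomic monoid and `a ∈ H` with
`|L(a)| ≤ 2`. Then `μ_adj(a) ≤ t(H)`. -/
theorem stmt16 {α : Type*} [CancelCommMonoid α]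
    (hred : Reduced α) (hatomic : Atomic α) (a : α)
    (hL : ∃ k l : ℕ, L a ⊆ {k, l}) :
    muadj a ≤ tH α := by
  letI := Classical.decEq {u : α // Irreducible u}
  apply sSup_le
  rintro r ⟨k, hk, ⟨l, ⟨hlL, hkL, hlk, _⟩, hdS⟩, rfl⟩
  obtain ⟨k0, l0, hsub⟩ := hL
  -- every pair of factorizations of lengths k and l is at distance exactly k
  have hub : ∀ x ∈ Zk a k, ∀ y ∈ Zk a l, d x y ≤ k := by
    rintro x ⟨hx, hxc⟩ y ⟨hy, hyc⟩
    simp only [d]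
    apply max_le
    · exact le_trans (Multiset.card_le_card tsub_le_self) (le_of_eq hxc)
    · exact le_trans (le_trans (Multiset.card_le_card tsub_le_self) (le_of_eq hyc))
        (le_of_lt hlk)
  have hall : ∀ x ∈ Zk a k, ∀ y ∈ Zk a l, d x y = k := by
    intro x hx y hy
    have h1 : k ≤ d x y := by
      have := Nat.sInf_le (s := {n : ℕ | ∃ x ∈ Zk a k, ∃ y ∈ Zk a l, d x y = n})
        ⟨x, hx, y, hy, rfl⟩
      rw [show sInf {n : ℕ | ∃ x ∈ Zk a k, ∃ y ∈ Zk a l, d x y = n} = k from hdS] at this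
      exact this
    exact le_antisymm (hub x hx y hy) h1
  have hdisj : ∀ x ∈ Zk a k, ∀ y ∈ Zk a l, ∀ u, u ∈ x → u ∉ y := by
    rintro x hx y hy u hux huy
    obtain ⟨hx1, hxc⟩ := hx
    obtain ⟨hy1, hyc⟩ := hy
    have hd := hall x ⟨hx1, hxc⟩ y ⟨hy1, hyc⟩
    simp only [d] at hd
    have h5 : Multiset.card (y - x) ≤ l :=
      le_trans (Multiset.card_le_card tsub_le_self) (le_of_eq hyc)
    have h6 : Multiset.card (x - y) = k := by
      rcases Nat.le_total (Multiset.card (x - y)) (Multiset.card (y - x)) with h | h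
      · rw [max_eq_right h] at hd; omega
      · rw [max_eq_left h] at hd; omega
    have h7 : x - y = x :=
      Multiset.eq_of_le_of_card_le tsub_le_self (by rw [hxc, h6])
    have h8 : Multiset.count u (x - y) = Multiset.count u x - Multiset.count u y :=
      Multiset.count_sub u x y
    rw [h7] at h8
    have hcx : 0 < Multiset.count u x := Multiset.count_pos.2 hux
    have hcy : 0 < Multiset.count u y := Multiset.count_pos.2 huy
    omega
  obtain ⟨z, hz, hzc⟩ := id hk
  obtain ⟨z', hz', hzc'⟩ := id hlL
  have hkpos : 0 < k := lt_of_le_of_lt (Nat.zero_le l) hlk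
  have hzne : z ≠ 0 := by
    intro h
    rw [h] at hzc
    simp at hzc
    omega
  obtain ⟨u, hu⟩ := Multiset.exists_mem_of_ne_zero hzne
  have h1 : (k : ℕ∞) ≤ tdeg a ({u} : Fac α) := by
    apply le_sInf
    intro N hN
    obtain ⟨z'', hz'', huz'', hd⟩ :=
      hN z' hz' ⟨z, hz, Multiset.singleton_le.2 hu⟩
    have huz''' : u ∈ z'' := Multiset.singleton_le.1 huz''
    have hm : Multiset.card z'' = k ∨ Multiset.card z'' = l := by
      have hmem : Multiset.card z'' ∈ L a := ⟨z'', hz'', rfl⟩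
      have h2 := hsub hmem
      have h3 := hsub hkL
      have h4 := hsub hlL
      simp only [Set.mem_insert_iff, Set.mem_singleton_iff] at h2 h3 h4
      omega
    have hm' : Multiset.card z'' = k := by
      rcases hm with h | h
      · exact h
      · exact absurd huz''' (hdisj z ⟨hz, hzc⟩ z'' ⟨hz'', h⟩ u hu)
    have hdk : d z'' z' = k := hall z'' ⟨hz'', hm'⟩ z' ⟨hz', hzc'⟩
    have hdsymm : d z' z'' = d z'' z' := by simp only [d]; exact max_comm _ _
    calc (k : ℕ∞) = ((d z' z'' : ℕ) : ℕ∞) := by rw [hdsymm, hdk]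
      _ ≤ N := hd
  calc (k : ℕ∞) ≤ tdeg a ({u} : Fac α) := h1
    _ ≤ tH α := le_iSup_of_le a (le_iSup (fun v : {u : α // Irreducible u} => tdeg a ({v} : Fac α)) u)

end CMR
end
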